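/- arXiv:1702.05257 — 10 statements merged into one kernel-verified Lean document; each statement's English description precedes it below -/
import Mathlib

section
/- Let A be a finite abelian group and let S ⊂ A be an inverse-closed subset of A not containing the identity. If S generates A, then the Cayley graph Cay(A;S) is highly distance-balanced. -/
open SimpleGraph

/-- The set of vertices strictly closer to `u` than to `v`. -/
def wSet {V : Type*} (G : SimpleGraph V) (u v : V) : Set V :=
  {w | G.dist u w < G.dist v w}

/-- The pair `u, v` is balanced if `|W_{uv}| = |W_{vu}|`. -/
def IsBalancedPair {V : Type*} (G : SimpleGraph V) (u v : V) : Prop :=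
  (wSet G u v).ncard = (wSet G v u).ncard

/-- `G` is `ℓ`-distance-balanced if every pair of vertices at distance `ℓ` is balanced. -/
def IsDistBalanced {V : Type*} (G : SimpleGraph V) (ℓ : ℕ) : Prop :=
  ∀ u v : V, G.dist u v = ℓ → IsBalancedPair G u v

/-- `G` is highly distance-balanced if it is `ℓ`-distance-balanced for all `1 ≤ ℓ ≤ diam`. -/
def IsHighlyDistBalanced {V : Type*} (G : SimpleGraph V) : Prop :=
  ∀ ℓ : ℕ, 1 ≤ ℓ → ℓ ≤ G.diam → IsDistBalanced G ℓ

/-- The generalized Petersen graph `GP(n,k)`: `Sum.inl i` is the outer vertex `u_i`,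
`Sum.inr i` is the inner vertex `v_i`. -/
def GP (n k : ℕ) : SimpleGraph (ZMod n ⊕ ZMod n) :=
  SimpleGraph.fromRel (fun x y =>
    match x, y with
    | Sum.inl i, Sum.inl j => j = i + 1
    | Sum.inr i, Sum.inr j => j = i + (k : ZMod n)
    | Sum.inl i, Sum.inr j => i = j
    | Sum.inr _, Sum.inl _ => False)

/-- The Cayley graph of a group with connection set `S` (intended for `S = S⁻¹`, `1 ∉ S`). -/
def cayleyGraph {A : Type*} [Group A] (S : Set A) : SimpleGraph A :=
  SimpleGraph.fromRel (fun g h => g⁻¹ * h ∈ S)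

private lemma iso_dist_le {V W : Type*} {G : SimpleGraph V} {G' : SimpleGraph W}
    (φ : G ≃g G') (u v : V) : G'.dist (φ u) (φ v) ≤ G.dist u v := by
  by_cases h : G.Reachable u v
  · obtain ⟨p, hp⟩ := h.exists_walk_length_eq_dist
    calc G'.dist (φ u) (φ v) ≤ (p.map φ.toHom).length := SimpleGraph.dist_le _
      _ = G.dist u v := by rw [SimpleGraph.Walk.length_map, hp]
  · have h' : ¬ G'.Reachable (φ u) (φ v) := by
      intro hr
      have := hr.map (φ.symm.toHom)
      exact h (by simpa using this)
    rw [SimpleGraph.dist_eq_zero_of_not_reachable h,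
        SimpleGraph.dist_eq_zero_of_not_reachable h']

private lemma iso_dist_eq {V W : Type*} {G : SimpleGraph V} {G' : SimpleGraph W}
    (φ : G ≃g G') (u v : V) : G'.dist (φ u) (φ v) = G.dist u v := by
  refine le_antisymm (iso_dist_le φ u v) ?_
  have := iso_dist_le φ.symm (φ u) (φ v)
  simpa using this

theorem statement_2 {A : Type*} [CommGroup A] [Fintype A] (S : Set A)
    (hSinv : S⁻¹ = S) (hS1 : (1 : A) ∉ S) (hgen : Subgroup.closure S = ⊤) :
    IsHighlyDistBalanced (cayleyGraph S) := by
  intro ℓ _ _ u v _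
  -- the involution x ↦ u * v * x⁻¹ is a graph automorphism swapping u and v
  have hinv : Function.Involutive (fun x : A => u * v * x⁻¹) := by
    intro x
    simp [mul_inv_rev, mul_assoc, mul_comm, mul_left_comm, inv_mul_cancel_left,
      mul_inv_cancel_left]
  let e : A ≃ A := hinv.toPerm _
  have hkey : ∀ a b : A, (u * v * a⁻¹)⁻¹ * (u * v * b⁻¹) = b⁻¹ * a := by
    intro a b
    rw [mul_inv_rev, inv_inv, mul_assoc, inv_mul_cancel_left, mul_comm]
  have hadj : ∀ a b : A, (cayleyGraph S).Adj (e a) (e b) ↔ (cayleyGraph S).Adj a b := by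
    intro a b
    simp only [cayleyGraph, SimpleGraph.fromRel_adj, e, Function.Involutive.coe_toPerm]
    constructor
    · rintro ⟨hne, h⟩
      refine ⟨fun hab => hne (by rw [hab]), ?_⟩
      rw [hkey, hkey] at h
      tauto
    · rintro ⟨hne, h⟩
      refine ⟨fun hab => hne (hinv.injective hab), ?_⟩
      rw [hkey, hkey]
      tauto
  let φ : cayleyGraph S ≃g cayleyGraph S := ⟨e, hadj _ _⟩
  have hφu : φ u = v := by
    show u * v * u⁻¹ = v
    rw [mul_comm u v, mul_assoc]; simp
  have hφv : φ v = u := by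
    show u * v * v⁻¹ = u
    rw [mul_assoc]; simp
  have hdistφ : ∀ a b : A, (cayleyGraph S).dist (φ a) (φ b) = (cayleyGraph S).dist a b :=
    iso_dist_eq φ
  have himg : (fun x : A => φ x) '' (wSet (cayleyGraph S) u v) = wSet (cayleyGraph S) v u := by
    ext w
    constructor
    · rintro ⟨x, hx, rfl⟩
      have h1 : (cayleyGraph S).dist v (φ x) = (cayleyGraph S).dist u x := by
        rw [← hφu, hdistφ]
      have h2 : (cayleyGraph S).dist u (φ x) = (cayleyGraph S).dist v x := by
        rw [← hφv, hdistφ]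
      simpa [wSet, h1, h2] using hx
    · intro hw
      refine ⟨φ w, ?_, hinv w⟩
      have h1 : (cayleyGraph S).dist u (φ w) = (cayleyGraph S).dist v w := by
        rw [← hφv, hdistφ]
      have h2 : (cayleyGraph S).dist v (φ w) = (cayleyGraph S).dist u w := by
        rw [← hφu, hdistφ]
      simpa [wSet, h1, h2] using hw
  unfold IsBalancedPair
  have hinj : Function.Injective (fun x : A => φ x) := fun a b h => e.injective h
  rw [← himg, Set.ncard_image_of_injective _ hinj]
end

section
/- Let Γ be a connected bipartite finite simple graph which is distance degree regular. Then Γ is 1-distance-balanced and (provided its diameter is at least 2) 2-distance-balanced. -/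
open SimpleGraph

private lemma fin2_sub {a b : Fin 2} (h : a ≠ b) :
    ((a : ℕ) : ZMod 2) - ((b : ℕ) : ZMod 2) = 1 := by
  fin_cases a <;> fin_cases b <;> simp_all <;> decide

private lemma walk_parity {V : Type*} {G : SimpleGraph V} (c : G.Coloring (Fin 2))
    {x y : V} (p : G.Walk x y) :
    ((p.length : ℕ) : ZMod 2) = ((c x : ℕ) : ZMod 2) - ((c y : ℕ) : ZMod 2) := by
  induction p with
  | nil => simp
  | cons h q ih =>
    rename_i a b e
    have h1 := fin2_sub (c.valid h)
    have h2 : ∀ z : ZMod 2, z + z = 0 := by decide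
    simp only [SimpleGraph.Walk.length_cons, Nat.cast_add, Nat.cast_one, ih]
    linear_combination h1 + h2 1 + h2 ((c b : ℕ) : ZMod 2) - h2 ((c a : ℕ) : ZMod 2)

private lemma dist_parity {V : Type*} {G : SimpleGraph V} (hc : G.Connected)
    (c : G.Coloring (Fin 2)) (x y : V) :
    ((G.dist x y : ℕ) : ZMod 2) = ((c x : ℕ) : ZMod 2) - ((c y : ℕ) : ZMod 2) := by
  obtain ⟨p, hp⟩ := (hc x y).exists_walk_length_eq_dist
  rw [← hp]
  exact walk_parity c p

private lemma key_balanced {V : Type*} [Fintype V] (G : SimpleGraph V) (hc : G.Connected)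
    (hbip : G.Colorable 2)
    (hddr : ∀ u v : V, ∀ i : ℕ, i ≤ G.diam →
      ({w : V | G.dist u w = i}).ncard = ({w : V | G.dist v w = i}).ncard)
    (ℓ : ℕ) (hℓ : ℓ = 1 ∨ ℓ = 2) : IsDistBalanced G ℓ := by
  classical
  obtain ⟨c⟩ := hbip
  intro u v huv
  have hV : Nonempty V := hc.nonempty
  -- ediam is finite
  have hediam : G.ediam ≠ ⊤ := by
    obtain ⟨a, b, hab⟩ := SimpleGraph.exists_edist_eq_ediam_of_finite (G := G)
    rw [← hab]
    exact SimpleGraph.edist_ne_top_iff_reachable.mpr (hc a b)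
  have hdle : ∀ x w : V, G.dist x w ≤ G.diam := fun x w =>
    SimpleGraph.dist_le_diam hediam
  -- sums of distances agree
  have sum_eq : ∀ x : V, (∑ w : V, G.dist x w) =
      ∑ i ∈ Finset.range (G.diam + 1),
        i * (Finset.univ.filter (fun w => G.dist x w = i)).card := by
    intro x
    rw [← Finset.sum_fiberwise_of_maps_to (g := fun w => G.dist x w)
      (t := Finset.range (G.diam + 1))
      (fun w _ => Finset.mem_range.mpr (Nat.lt_succ_of_le (hdle x w)))]
    refine Finset.sum_congr rfl fun i _ => ?_
    rw [Finset.sum_congr rfl (fun w hw => (Finset.mem_filter.mp hw).2),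
      Finset.sum_const, smul_eq_mul, mul_comm]
  have card_eq : ∀ i : ℕ, i ≤ G.diam →
      (Finset.univ.filter (fun w => G.dist u w = i)).card =
      (Finset.univ.filter (fun w => G.dist v w = i)).card := by
    intro i hi
    have := hddr u v i hi
    rwa [Set.ncard_eq_toFinset_card', Set.toFinset_setOf,
      Set.ncard_eq_toFinset_card', Set.toFinset_setOf] at this
  have sums : (∑ w : V, G.dist u w) = ∑ w : V, G.dist v w := by
    rw [sum_eq u, sum_eq v]
    refine Finset.sum_congr rfl fun i hi => ?_
    rw [card_eq i (Nat.lt_succ_iff.mp (Finset.mem_range.mp hi))]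
  -- pointwise structure of the difference
  have pointwise : ∀ w : V, (G.dist v w : ℤ) - G.dist u w =
      if G.dist u w < G.dist v w then (ℓ : ℤ)
      else if G.dist v w < G.dist u w then -(ℓ : ℤ) else 0 := by
    intro w
    have t1 : G.dist u w ≤ ℓ + G.dist v w := by
      rw [← huv]; exact hc.dist_triangle
    have t2 : G.dist v w ≤ ℓ + G.dist u w := by
      rw [← huv, SimpleGraph.dist_comm (G := G) (u := u) (v := v)]
      exact hc.dist_triangle
    have hpar : (G.dist u w + G.dist v w) % 2 = ℓ % 2 := by
      rw [← ZMod.natCast_eq_natCast_iff']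
      push_cast
      rw [dist_parity hc c u w, dist_parity hc c v w, ← huv, dist_parity hc c u v]
      have h2 : ∀ z : ZMod 2, z + z = 0 := by decide
      linear_combination h2 (((c v : ℕ) : ZMod 2)) - h2 (((c w : ℕ) : ZMod 2))
    rcases hℓ with rfl | rfl <;>
    · split_ifs with h1 h2 <;> omega
  -- total difference is zero
  have total : (∑ w : V, ((G.dist v w : ℤ) - G.dist u w)) = 0 := by
    rw [Finset.sum_sub_distrib]
    push_cast [← Nat.cast_sum]
    rw [sums]; ring
  set A := Finset.univ.filter (fun w => G.dist u w < G.dist v w) with hA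
  set B := Finset.univ.filter (fun w => G.dist v w < G.dist u w) with hB
  have total2 : (∑ w : V, ((G.dist v w : ℤ) - G.dist u w)) =
      (ℓ : ℤ) * A.card - (ℓ : ℤ) * B.card := by
    rw [Finset.sum_congr rfl (fun w _ => pointwise w), Finset.sum_ite]
    rw [Finset.sum_ite, Finset.sum_const, Finset.sum_const, Finset.sum_const]
    have hBB : (Finset.univ.filter (fun w => ¬ G.dist u w < G.dist v w)).filter
        (fun w => G.dist v w < G.dist u w) = B := by
      rw [Finset.filter_filter, hB]
      exact Finset.filter_congr (fun w _ => by constructor <;> [exact And.right;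
        exact fun h => ⟨fun h' => absurd h (not_lt_of_gt h'), h⟩])
    rw [hBB]
    simp [mul_comm, sub_eq_add_neg]
    exact Or.inl (congrArg Finset.card (Finset.filter_congr (fun _ _ => Iff.rfl)))
  have hℓpos : (0 : ℤ) < (ℓ : ℤ) := by rcases hℓ with rfl | rfl <;> norm_num
  have hcard : A.card = B.card := by
    have h0 : (ℓ : ℤ) * A.card - (ℓ : ℤ) * B.card = 0 := by rw [← total2, total]
    have : (ℓ : ℤ) * A.card = (ℓ : ℤ) * B.card := by linarith
    exact_mod_cast mul_left_cancel₀ (ne_of_gt hℓpos) this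
  unfold IsBalancedPair wSet
  rw [Set.ncard_eq_toFinset_card', Set.toFinset_setOf,
    Set.ncard_eq_toFinset_card', Set.toFinset_setOf]
  exact hcard

theorem statement_4 {V : Type*} [Fintype V] (G : SimpleGraph V) (hc : G.Connected)
    (hbip : G.Colorable 2)
    (hddr : ∀ u v : V, ∀ i : ℕ, i ≤ G.diam →
      ({w : V | G.dist u w = i}).ncard = ({w : V | G.dist v w = i}).ncard) :
    IsDistBalanced G 1 ∧ (2 ≤ G.diam → IsDistBalanced G 2) :=
  ⟨key_balanced G hc hbip hddr 1 (Or.inl rfl),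
   fun _ => key_balanced G hc hbip hddr 2 (Or.inr rfl)⟩
end

section
/- Every connected bipartite Cayley graph of diameter at least 2 is 2-distance-balanced. -/
open SimpleGraph

section Aux

lemma aux_iso_dist_le {V W : Type*} {G : SimpleGraph V} {H : SimpleGraph W} (f : G ≃g H)
    (u v : V) : H.dist (f u) (f v) ≤ G.dist u v := by
  by_cases hr : G.Reachable u v
  · obtain ⟨p, hp⟩ := hr.exists_walk_length_eq_dist
    calc H.dist (f u) (f v) ≤ (p.map f.toHom).length := H.dist_le _
    _ = G.dist u v := by rw [SimpleGraph.Walk.length_map, hp]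
  · have h1 : G.dist u v = 0 := by
      rw [SimpleGraph.dist_eq_zero_iff_eq_or_not_reachable]; exact Or.inr hr
    have hr' : ¬ H.Reachable (f u) (f v) := fun h => by
      have := h.map f.symm.toHom
      simp at this
      exact hr this
    have h2 : H.dist (f u) (f v) = 0 := by
      rw [SimpleGraph.dist_eq_zero_iff_eq_or_not_reachable]; exact Or.inr hr'
    omega

lemma aux_iso_dist {V W : Type*} {G : SimpleGraph V} {H : SimpleGraph W} (f : G ≃g H)
    (u v : V) : H.dist (f u) (f v) = G.dist u v := by
  refine le_antisymm (aux_iso_dist_le f u v) ?_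
  have := aux_iso_dist_le f.symm (f u) (f v)
  simpa using this

variable {A : Type*} [Group A] (S : Set A)

/-- Left multiplication as a graph automorphism of the Cayley graph. -/
def auxLeftMulIso (g : A) : cayleyGraph S ≃g cayleyGraph S where
  toEquiv := Equiv.mulLeft g
  map_rel_iff' := by
    intro a b
    simp [cayleyGraph, SimpleGraph.fromRel_adj, mul_assoc]

lemma aux_leftMul_dist (g a b : A) :
    (cayleyGraph S).dist (g * a) (g * b) = (cayleyGraph S).dist a b :=
  aux_iso_dist (auxLeftMulIso S g) a b

/-- Parity of colors along a walk, for a 2-coloring. -/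
lemma aux_walk_parity {V : Type*} {G : SimpleGraph V} (C : G.Coloring (Fin 2))
    {a b : V} (p : G.Walk a b) :
    (((C b : ℕ) : ZMod 2)) = ((C a : ℕ) : ZMod 2) + p.length := by
  induction p with
  | nil => simp
  | @cons x y z h q ih =>
    have hxy : C x ≠ C y := C.valid h
    have h1 : (((C y : Fin 2) : ℕ) : ZMod 2) = ((C x : Fin 2) : ℕ) + 1 := by
      revert hxy; generalize (C x) = cx; generalize (C y) = cy; revert cx cy; decide
    rw [ih, h1]
    push_cast [SimpleGraph.Walk.length_cons]
    ring

lemma aux_dist_parity {V : Type*} {G : SimpleGraph V} (C : G.Coloring (Fin 2))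
    {a b : V} (hr : G.Reachable a b) :
    (((C b : ℕ) : ZMod 2)) = ((C a : ℕ) : ZMod 2) + G.dist a b := by
  obtain ⟨p, hp⟩ := hr.exists_walk_length_eq_dist
  rw [← hp]
  exact aux_walk_parity C p

end Aux

theorem statement_6 {A : Type*} [Group A] [Fintype A] (S : Set A)
    (hSinv : S⁻¹ = S) (hS1 : (1 : A) ∉ S)
    (hc : (cayleyGraph S).Connected) (hbip : (cayleyGraph S).Colorable 2)
    (hdiam : 2 ≤ (cayleyGraph S).diam) :
    IsDistBalanced (cayleyGraph S) 2 := by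
  classical
  set G := cayleyGraph S with hG
  intro u v huv
  obtain ⟨C⟩ := hbip
  -- parity: distances from u and from v to any w have equal parity
  have hpar : ∀ w : A, G.dist u w % 2 = G.dist v w % 2 := by
    intro w
    have h1 := aux_dist_parity C (hc u w)
    have h2 := aux_dist_parity C (hc v w)
    have h3 := aux_dist_parity C (hc u v)
    rw [huv] at h3
    have h4 : ((G.dist u w : ZMod 2)) = (G.dist v w : ZMod 2) := by
      have : ((C u : ℕ) : ZMod 2) = ((C v : ℕ) : ZMod 2) := by
        rw [h3]; push_cast; reduce_mod_char
      rw [this, h2] at h1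
      exact add_left_cancel h1.symm
    have := (ZMod.natCast_eq_natCast_iff _ _ _).mp h4
    exact this
  -- triangle inequalities
  have tri1 : ∀ w : A, G.dist u w ≤ G.dist v w + 2 := by
    intro w
    have := hc.dist_triangle (u := u) (v := v) (w := w)
    rw [huv] at this; omega
  have tri2 : ∀ w : A, G.dist v w ≤ G.dist u w + 2 := by
    intro w
    have := hc.dist_triangle (u := v) (v := u) (w := w)
    have hcomm : G.dist v u = G.dist u v := SimpleGraph.dist_comm
    omega
  -- sum of distances from u equals sum from v (vertex-transitivity)
  have hsum : ∑ w : A, (G.dist u w : ℤ) = ∑ w : A, (G.dist v w : ℤ) := by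
    have := Equiv.sum_comp (Equiv.mulLeft (u * v⁻¹)) (fun w => (G.dist u w : ℤ))
    rw [← this]
    refine Finset.sum_congr rfl fun w _ => ?_
    have : G.dist u ((u * v⁻¹) * w) = G.dist ((u * v⁻¹) * v) ((u * v⁻¹) * w) := by
      rw [inv_mul_cancel_right]
    rw [Equiv.coe_mulLeft, this, aux_leftMul_dist]
  -- pointwise decomposition of the difference
  have hpt : ∀ w : A, (G.dist v w : ℤ) - G.dist u w =
      (if G.dist u w < G.dist v w then 2 else 0) -
      (if G.dist v w < G.dist u w then 2 else 0) := by
    intro w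
    have h1 := hpar w
    have h2 := tri1 w
    have h3 := tri2 w
    rcases lt_trichotomy (G.dist u w) (G.dist v w) with h | h | h
    · have : G.dist v w = G.dist u w + 2 := by omega
      simp [h, not_lt_of_gt h, this]
    · simp [h]
    · have : G.dist u w = G.dist v w + 2 := by omega
      simp [h, not_lt_of_gt h, this]
  -- turn the zero sum into a cardinality equality
  have key : ∑ w : A, ((if G.dist u w < G.dist v w then (2:ℤ) else 0) -
      (if G.dist v w < G.dist u w then (2:ℤ) else 0)) = 0 := by
    calc _ = ∑ w : A, ((G.dist v w : ℤ) - G.dist u w) :=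
          Finset.sum_congr rfl fun w _ => (hpt w).symm
    _ = 0 := by rw [Finset.sum_sub_distrib, hsum]; ring
  rw [Finset.sum_sub_distrib, ← Finset.sum_filter, ← Finset.sum_filter,
    sub_eq_zero] at key
  simp only [Finset.sum_const, nsmul_eq_mul] at key
  have hcard : (Finset.univ.filter fun w => G.dist u w < G.dist v w).card =
      (Finset.univ.filter fun w => G.dist v w < G.dist u w).card := by
    have h2 : ((Finset.univ.filter fun w => G.dist u w < G.dist v w).card : ℤ) =
        ((Finset.univ.filter fun w => G.dist v w < G.dist u w).card : ℤ) := by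
      linarith [key]
    exact_mod_cast h2
  unfold IsBalancedPair wSet
  rw [Set.ncard_eq_toFinset_card', Set.ncard_eq_toFinset_card']
  simpa [Set.toFinset_setOf] using hcard
end

section
/- Let Γ be a connected finite simple graph of diameter 2. Then Γ is highly distance-balanced (i.e. both 1-distance-balanced and 2-distance-balanced) if and only if Γ is regular. -/
open SimpleGraph

section Aux
variable {V : Type*} [Fintype V] (G : SimpleGraph V)

lemma ediam_ne_top_of_connected (hc : G.Connected) : G.ediam ≠ ⊤ := by
  have : Nonempty V := hc.nonempty
  obtain ⟨u, v, huv⟩ := G.exists_edist_eq_ediam_of_finite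
  rw [← huv, SimpleGraph.edist_ne_top_iff_reachable]
  exact hc u v

lemma wSet_eq (hc : G.Connected) (hdiam : G.diam = 2) {u v : V} (huv : u ≠ v) :
    wSet G u v = insert u ((G.neighborSet u \ G.neighborSet v) \ {v}) := by
  have hne := ediam_ne_top_of_connected G hc
  ext w
  simp only [wSet, Set.mem_setOf_eq, Set.mem_insert_iff, Set.mem_diff,
    SimpleGraph.mem_neighborSet, Set.mem_singleton_iff]
  constructor
  · intro h
    by_cases hwu : w = u
    · left; exact hwu
    right
    have h1 : 1 ≤ G.dist u w := hc.pos_dist_of_ne (Ne.symm hwu)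
    have h2 : G.dist v w ≤ 2 := hdiam ▸ G.dist_le_diam hne
    have hdvw : G.dist v w = 2 := by omega
    have hduw : G.dist u w = 1 := by omega
    have hwv : w ≠ v := by
      intro he; subst he; simp [SimpleGraph.dist_self] at hdvw
    refine ⟨⟨SimpleGraph.dist_eq_one_iff_adj.mp hduw, fun hadj => ?_⟩, hwv⟩
    rw [SimpleGraph.dist_eq_one_iff_adj.mpr hadj] at hdvw; omega
  · rintro (rfl | ⟨⟨hadj, hnadj⟩, hwv⟩)
    · rw [SimpleGraph.dist_self]
      exact hc.pos_dist_of_ne (Ne.symm huv)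
    · rw [SimpleGraph.dist_eq_one_iff_adj.mpr hadj]
      have h1 : 1 ≤ G.dist v w := hc.pos_dist_of_ne (Ne.symm hwv)
      have : G.dist v w ≠ 1 := fun h => hnadj (SimpleGraph.dist_eq_one_iff_adj.mp h)
      omega

lemma wSet_ncard (hc : G.Connected) (hdiam : G.diam = 2) {u v : V} (huv : u ≠ v) :
    (wSet G u v).ncard =
      1 + (G.neighborSet u).ncard
        - (G.neighborSet u ∩ (G.neighborSet v ∪ {v})).ncard := by
  rw [wSet_eq G hc hdiam huv]
  have hd : (G.neighborSet u \ G.neighborSet v) \ {v}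
      = G.neighborSet u \ (G.neighborSet u ∩ (G.neighborSet v ∪ {v})) := by
    ext w
    simp only [Set.mem_diff, SimpleGraph.mem_neighborSet, Set.mem_singleton_iff,
      Set.mem_inter_iff, Set.mem_union]
    tauto
  have hnotmem : u ∉ (G.neighborSet u \ G.neighborSet v) \ {v} := by
    simp [SimpleGraph.irrefl]
  rw [Set.ncard_insert_of_notMem hnotmem (Set.toFinite _), hd,
    Set.ncard_diff Set.inter_subset_left (Set.toFinite _)]
  have hle : (G.neighborSet u ∩ (G.neighborSet v ∪ {v})).ncard ≤ (G.neighborSet u).ncard :=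
    Set.ncard_le_ncard Set.inter_subset_left (Set.toFinite _)
  omega

lemma inter_ncard_symm {u v : V} (huv : u ≠ v) :
    (G.neighborSet u ∩ (G.neighborSet v ∪ {v})).ncard
      = (G.neighborSet v ∩ (G.neighborSet u ∪ {u})).ncard := by
  by_cases hadj : G.Adj u v
  · have h1 : G.neighborSet u ∩ (G.neighborSet v ∪ {v})
        = insert v (G.neighborSet u ∩ G.neighborSet v) := by
      ext w
      simp only [Set.mem_inter_iff, Set.mem_union, Set.mem_singleton_iff,
        Set.mem_insert_iff, SimpleGraph.mem_neighborSet]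
      constructor
      · rintro ⟨h1, h2 | rfl⟩
        · exact Or.inr ⟨h1, h2⟩
        · exact Or.inl rfl
      · rintro (rfl | ⟨h1, h2⟩)
        · exact ⟨hadj, Or.inr rfl⟩
        · exact ⟨h1, Or.inl h2⟩
    have h2 : G.neighborSet v ∩ (G.neighborSet u ∪ {u})
        = insert u (G.neighborSet u ∩ G.neighborSet v) := by
      ext w
      simp only [Set.mem_inter_iff, Set.mem_union, Set.mem_singleton_iff,
        Set.mem_insert_iff, SimpleGraph.mem_neighborSet]
      constructor
      · rintro ⟨h1, h2 | rfl⟩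
        · exact Or.inr ⟨h2, h1⟩
        · exact Or.inl rfl
      · rintro (rfl | ⟨h1, h2⟩)
        · exact ⟨hadj.symm, Or.inr rfl⟩
        · exact ⟨h2, Or.inl h1⟩
    rw [h1, h2,
      Set.ncard_insert_of_notMem (by simp [SimpleGraph.irrefl]) (Set.toFinite _),
      Set.ncard_insert_of_notMem (by simp [SimpleGraph.irrefl]) (Set.toFinite _)]
  · have h1 : G.neighborSet u ∩ (G.neighborSet v ∪ {v})
        = G.neighborSet u ∩ G.neighborSet v := by
      ext w
      simp only [Set.mem_inter_iff, Set.mem_union, Set.mem_singleton_iff,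
        SimpleGraph.mem_neighborSet]
      constructor
      · rintro ⟨h1, h2 | rfl⟩
        · exact ⟨h1, h2⟩
        · exact absurd h1 hadj
      · rintro ⟨h1, h2⟩; exact ⟨h1, Or.inl h2⟩
    have h2 : G.neighborSet v ∩ (G.neighborSet u ∪ {u})
        = G.neighborSet u ∩ G.neighborSet v := by
      ext w
      simp only [Set.mem_inter_iff, Set.mem_union, Set.mem_singleton_iff,
        SimpleGraph.mem_neighborSet]
      constructor
      · rintro ⟨ha, hb | rfl⟩
        · exact ⟨hb, ha⟩
        · exact absurd ha.symm hadj
      · rintro ⟨ha, hb⟩; exact ⟨hb, Or.inl ha⟩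
    rw [h1, h2]

lemma balanced_iff_deg_eq (hc : G.Connected) (hdiam : G.diam = 2) {u v : V} (huv : u ≠ v) :
    IsBalancedPair G u v ↔ (G.neighborSet u).ncard = (G.neighborSet v).ncard := by
  unfold IsBalancedPair
  rw [wSet_ncard G hc hdiam huv, wSet_ncard G hc hdiam huv.symm,
    inter_ncard_symm G huv]
  set m := (G.neighborSet v ∩ (G.neighborSet u ∪ {u})).ncard with hm
  have h1 : m ≤ (G.neighborSet u).ncard := by
    rw [hm, inter_ncard_symm G huv.symm]
    exact Set.ncard_le_ncard Set.inter_subset_left (Set.toFinite _)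
  have h2 : m ≤ (G.neighborSet v).ncard :=
    Set.ncard_le_ncard Set.inter_subset_left (Set.toFinite _)
  omega

end Aux

theorem statement_8 {V : Type*} [Fintype V] (G : SimpleGraph V) (hc : G.Connected)
    (hdiam : G.diam = 2) :
    IsHighlyDistBalanced G ↔ ∃ r : ℕ, ∀ v : V, (G.neighborSet v).ncard = r := by
  constructor
  · intro h
    have : Nonempty V := hc.nonempty
    obtain ⟨v0⟩ := this
    refine ⟨(G.neighborSet v0).ncard, fun v => ?_⟩
    obtain ⟨w⟩ := hc v0 v
    induction w with
    | nil => rfl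
    | cons hadj p ih =>
        rw [ih]
        have hd : G.dist _ _ = 1 := SimpleGraph.dist_eq_one_iff_adj.mpr hadj
        have hb := h 1 le_rfl (by omega) _ _ hd
        exact ((balanced_iff_deg_eq G hc hdiam hadj.ne).mp hb).symm
  · rintro ⟨r, hr⟩ ℓ h1 h2 u v hd
    have huv : u ≠ v := by
      intro he; subst he; rw [SimpleGraph.dist_self] at hd; omega
    exact (balanced_iff_deg_eq G hc hdiam huv).mpr ((hr u).trans (hr v).symm)
end

section
/- Let Γ be a connected finite simple graph of diameter 2. Then Γ is 2-distance-balanced but not 1-distance-balanced if and only if Γ is a nonregular join of at least two regular graphs, that is, Γ = Γ₁ + Γ₂ + ··· + Γ_t where t ≥ 2, each Γ_i is regular, and Γ itself is not regular. -/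
open SimpleGraph

section AuxStatement9

open Finset

variable {V : Type*} [Fintype V] {G : SimpleGraph V}

set_option linter.unusedSectionVars false

lemma aux9_ediam_ne_top (hdiam : G.diam = 2) : G.ediam ≠ ⊤ :=
  SimpleGraph.ediam_ne_top_of_diam_ne_zero (by omega)

lemma aux9_dist_two_iff (hc : G.Connected) (hdiam : G.diam = 2) {u v : V} :
    G.dist u v = 2 ↔ u ≠ v ∧ ¬ G.Adj u v := by
  constructor
  · intro h
    refine ⟨fun he => by rw [he, SimpleGraph.dist_self] at h; omega, fun ha => ?_⟩
    rw [← SimpleGraph.dist_eq_one_iff_adj] at ha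
    omega
  · rintro ⟨hne, hna⟩
    have h1 : G.dist u v ≤ 2 := hdiam ▸ SimpleGraph.dist_le_diam (aux9_ediam_ne_top hdiam)
    have h2 : G.dist u v ≠ 0 := fun h => hne (hc.dist_eq_zero_iff.mp h)
    have h3 : G.dist u v ≠ 1 := fun h => hna (SimpleGraph.dist_eq_one_iff_adj.mp h)
    omega

lemma aux9_wSet_eq [DecidableEq V] [DecidableRel G.Adj] (hc : G.Connected) (hdiam : G.diam = 2)
    {u v : V} (hne : u ≠ v) :
    wSet G u v = ↑(insert u ((G.neighborFinset u \ G.neighborFinset v).erase v)) := by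
  ext w
  simp only [wSet, Set.mem_setOf_eq, Finset.mem_coe, Finset.mem_insert, Finset.mem_erase,
    Finset.mem_sdiff, SimpleGraph.mem_neighborFinset]
  by_cases hwu : w = u
  · subst hwu
    simp only [SimpleGraph.dist_self]
    have h0 : G.dist v w ≠ 0 := fun h => hne (hc.dist_eq_zero_iff.mp h).symm
    exact ⟨fun _ => by simp, fun _ => by omega⟩
  · by_cases hwv : w = v
    · subst hwv
      simp [SimpleGraph.dist_self, hwu]
    · have hb1 : G.dist u w ≤ 2 := hdiam ▸ SimpleGraph.dist_le_diam (aux9_ediam_ne_top hdiam)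
      have hb2 : G.dist v w ≤ 2 := hdiam ▸ SimpleGraph.dist_le_diam (aux9_ediam_ne_top hdiam)
      have hb3 : G.dist u w ≠ 0 := fun h => hwu (hc.dist_eq_zero_iff.mp h).symm
      have hb4 : G.dist v w ≠ 0 := fun h => hwv (hc.dist_eq_zero_iff.mp h).symm
      have key : G.dist u w < G.dist v w ↔ (G.dist u w = 1 ∧ G.dist v w = 2) := by omega
      rw [key, SimpleGraph.dist_eq_one_iff_adj, aux9_dist_two_iff hc hdiam]
      constructor
      · rintro ⟨h1, _, h2⟩
        exact Or.inr ⟨hwv, h1, h2⟩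
      · rintro (h | ⟨h3, h1, h2⟩)
        · exact absurd h hwu
        · exact ⟨h1, Ne.symm h3, h2⟩

lemma aux9_wSet_card [DecidableEq V] [DecidableRel G.Adj] (hc : G.Connected) (hdiam : G.diam = 2)
    {u v : V} (hne : u ≠ v) :
    (wSet G u v).ncard +
      (G.neighborFinset u ∩ insert v (G.neighborFinset v)).card = 1 + G.degree u := by
  rw [aux9_wSet_eq hc hdiam hne, Set.ncard_coe_finset]
  have hu : u ∉ (G.neighborFinset u \ G.neighborFinset v).erase v := by
    simp [SimpleGraph.irrefl]
  rw [Finset.card_insert_of_notMem hu]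
  have he : (G.neighborFinset u \ G.neighborFinset v).erase v
      = G.neighborFinset u \ insert v (G.neighborFinset v) := by
    ext w; simp only [mem_erase, mem_sdiff, mem_insert]; tauto
  rw [he]
  have h := Finset.card_sdiff_add_card_inter (G.neighborFinset u) (insert v (G.neighborFinset v))
  rw [G.card_neighborFinset_eq_degree] at h
  omega

lemma aux9_inter_ins_card [DecidableEq V] [DecidableRel G.Adj] (u v : V) :
    (G.neighborFinset u ∩ insert v (G.neighborFinset v)).card
      = (G.neighborFinset u ∩ G.neighborFinset v).card + (if G.Adj u v then 1 else 0) := by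
  have hsplit : G.neighborFinset u ∩ insert v (G.neighborFinset v)
      = (G.neighborFinset u ∩ {v}) ∪ (G.neighborFinset u ∩ G.neighborFinset v) := by
    ext w
    simp only [mem_inter, mem_insert, mem_union, mem_singleton]
    tauto
  have hdisj : Disjoint (G.neighborFinset u ∩ {v}) (G.neighborFinset u ∩ G.neighborFinset v) := by
    rw [Finset.disjoint_left]
    intro w hw1 hw2
    simp only [mem_inter, mem_singleton] at hw1 hw2
    rcases hw1 with ⟨_, rfl⟩
    exact G.irrefl (G.mem_neighborFinset w w |>.mp hw2.2)
  rw [hsplit, Finset.card_union_of_disjoint hdisj]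
  by_cases h : G.Adj u v
  · have : G.neighborFinset u ∩ {v} = {v} := by
      ext w; simp only [mem_inter, mem_singleton, mem_neighborFinset]
      exact ⟨fun hh => hh.2, fun hh => ⟨hh ▸ h, hh⟩⟩
    rw [this]; simp [h, add_comm]
  · have : G.neighborFinset u ∩ {v} = ∅ := by
      ext w; simp only [mem_inter, mem_singleton, mem_neighborFinset, notMem_empty, iff_false,
        not_and]
      rintro hh rfl; exact h hh
    rw [this]; simp [h]

lemma aux9_inter_symm_card [DecidableEq V] [DecidableRel G.Adj] (u v : V) :
    (G.neighborFinset u ∩ insert v (G.neighborFinset v)).card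
      = (G.neighborFinset v ∩ insert u (G.neighborFinset u)).card := by
  rw [aux9_inter_ins_card, aux9_inter_ins_card, Finset.inter_comm]
  congr 1
  simp [G.adj_comm u v]

lemma aux9_balanced_iff_deg [DecidableEq V] [DecidableRel G.Adj] (hc : G.Connected)
    (hdiam : G.diam = 2) {u v : V} (hne : u ≠ v) :
    IsBalancedPair G u v ↔ G.degree u = G.degree v := by
  have h1 := aux9_wSet_card hc hdiam hne
  have h2 := aux9_wSet_card hc hdiam hne.symm
  have h3 := aux9_inter_symm_card (G := G) u v
  unfold IsBalancedPair
  omega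

lemma aux9_deg_eq_of_adj_deg [DecidableRel G.Adj] (hc : G.Connected)
    (h : ∀ u v : V, G.Adj u v → G.degree u = G.degree v) (u v : V) :
    G.degree u = G.degree v := by
  obtain ⟨p⟩ := hc u v
  induction p with
  | nil => rfl
  | cons ha _ ih => exact (h _ _ ha).trans ih

lemma aux9_within_card [DecidableEq V] [DecidableRel G.Adj] {t : ℕ} (P : V → Fin t)
    (hcross : ∀ u v : V, P u ≠ P v → G.Adj u v) (v : V) :
    ({w : V | G.Adj v w ∧ P w = P v}).ncard
      + (Finset.univ.filter (fun w => P w ≠ P v)).card = G.degree v := by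
  have hset : ({w : V | G.Adj v w ∧ P w = P v})
      = ↑((G.neighborFinset v).filter (fun w => P w = P v)) := by
    ext w
    simp [mem_neighborFinset]
  rw [hset, Set.ncard_coe_finset]
  have hne : (G.neighborFinset v).filter (fun w => ¬ P w = P v)
      = Finset.univ.filter (fun w => P w ≠ P v) := by
    ext w
    simp only [mem_filter, mem_neighborFinset, Finset.mem_univ, true_and, ne_eq,
      and_iff_right_iff_imp]
    intro hw
    exact hcross v w (fun h => hw h.symm)
  rw [← hne]
  rw [← G.card_neighborFinset_eq_degree]
  exact Finset.card_filter_add_card_filter_not _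

end AuxStatement9

theorem statement_9 {V : Type*} [Fintype V] (G : SimpleGraph V) (hc : G.Connected)
    (hdiam : G.diam = 2) :
    (IsDistBalanced G 2 ∧ ¬ IsDistBalanced G 1) ↔
      ((¬ ∃ r : ℕ, ∀ v : V, (G.neighborSet v).ncard = r) ∧
        ∃ (t : ℕ), 2 ≤ t ∧
          ∃ (P : V → Fin t) (k : Fin t → ℕ),
            Function.Surjective P ∧
            (∀ u v : V, P u ≠ P v → G.Adj u v) ∧
            (∀ v : V, ({w : V | G.Adj v w ∧ P w = P v}).ncard = k (P v))) := by
  classical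
  have hdeg : ∀ v : V, (G.neighborSet v).ncard = G.degree v := by
    intro v
    rw [Set.ncard_eq_toFinset_card', ← SimpleGraph.card_neighborFinset_eq_degree,
      SimpleGraph.neighborFinset_def]
  have hV : Nonempty V := hc.nonempty
  constructor
  · rintro ⟨h2, h1⟩
    have key : ∀ u v : V, u ≠ v → ¬ G.Adj u v → G.degree u = G.degree v := fun u v hne hna =>
      (aux9_balanced_iff_deg hc hdiam hne).mp
        (h2 u v ((aux9_dist_two_iff hc hdiam).mpr ⟨hne, hna⟩))
    have hadj : ∀ u v : V, G.degree u ≠ G.degree v → G.Adj u v := by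
      intro u v hd
      by_contra hna
      exact hd (key u v (fun he => hd (he ▸ rfl)) hna)
    have hnreg : ¬ ∃ r : ℕ, ∀ v : V, (G.neighborSet v).ncard = r := by
      rintro ⟨r, hr⟩
      apply h1
      intro u v hduv
      have hne : u ≠ v := (SimpleGraph.dist_eq_one_iff_adj.mp hduv).ne
      exact (aux9_balanced_iff_deg hc hdiam hne).mpr
        (by rw [← hdeg, ← hdeg, hr, hr])
    refine ⟨hnreg, ?_⟩
    have hex : ∃ a b : V, G.degree a ≠ G.degree b := by
      by_contra hno
      push_neg at hno
      obtain ⟨v0⟩ := hV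
      exact hnreg ⟨G.degree v0, fun v => (hdeg v).trans (hno v v0)⟩
    obtain ⟨a, b, hab⟩ := hex
    set D : Finset ℕ := Finset.univ.image (fun v => G.degree v) with hD
    have hmem : ∀ v : V, G.degree v ∈ D := fun v =>
      Finset.mem_image_of_mem _ (Finset.mem_univ v)
    have ht : 2 ≤ D.card :=
      Finset.one_lt_card.mpr ⟨_, hmem a, _, hmem b, hab⟩
    refine ⟨D.card, ht, ?_⟩
    set P : V → Fin D.card := fun v => D.equivFin ⟨G.degree v, hmem v⟩ with hP
    have hPdeg : ∀ u v : V, P u = P v ↔ G.degree u = G.degree v := by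
      intro u v
      constructor
      · intro h
        exact congrArg Subtype.val (D.equivFin.injective h)
      · intro h
        simp only [hP]
        congr 1
        exact Subtype.ext h
    have hsurj : Function.Surjective P := by
      intro i
      obtain ⟨w, -, hw⟩ := Finset.mem_image.mp (D.equivFin.symm i).2
      refine ⟨w, ?_⟩
      have hsub : (⟨G.degree w, hmem w⟩ : {x // x ∈ D}) = D.equivFin.symm i :=
        Subtype.ext hw
      simp [hP, hsub]
    have hcross : ∀ u v : V, P u ≠ P v → G.Adj u v := fun u v h =>
      hadj u v (fun hd => h ((hPdeg u v).mpr hd))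
    refine ⟨P, fun i =>
      Set.ncard {w : V | G.Adj (Function.surjInv hsurj i) w ∧ P w = i}, hsurj, hcross, ?_⟩
    intro v
    show ({w : V | G.Adj v w ∧ P w = P v}).ncard
      = Set.ncard {w : V | G.Adj (Function.surjInv hsurj (P v)) w ∧ P w = P v}
    set x := Function.surjInv hsurj (P v) with hxdef
    have hx : P x = P v := Function.surjInv_eq hsurj (P v)
    have h1 := aux9_within_card P hcross v
    have h2 := aux9_within_card P hcross x
    rw [hx] at h2
    have hdvx : G.degree x = G.degree v := (hPdeg x v).mp hx
    omega
  · rintro ⟨hnreg, t, ht2, P, k, hsurj, hcross, hk⟩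
    have hdegform : ∀ v : V,
        G.degree v = k (P v) + (Finset.univ.filter (fun w => P w ≠ P v)).card := by
      intro v
      have h := aux9_within_card P hcross v
      rw [hk v] at h
      omega
    constructor
    · intro u v hduv
      obtain ⟨hne, hna⟩ := (aux9_dist_two_iff hc hdiam).mp hduv
      have hPuv : P u = P v := by
        by_contra h
        exact hna (hcross u v h)
      apply (aux9_balanced_iff_deg hc hdiam hne).mpr
      rw [hdegform u, hdegform v, hPuv]
    · intro h1
      apply hnreg
      have hall : ∀ u v : V, G.Adj u v → G.degree u = G.degree v := by
        intro u v ha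
        exact (aux9_balanced_iff_deg hc hdiam ha.ne).mp
          (h1 u v (SimpleGraph.dist_eq_one_iff_adj.mpr ha))
      have hconst := aux9_deg_eq_of_adj_deg hc hall
      obtain ⟨v0⟩ := hV
      exact ⟨G.degree v0, fun v => (hdeg v).trans (hconst v v0)⟩
end

section
/- Let Γ be a connected bipartite finite simple graph of diameter 3 with bipartition sets X and Y. Then Γ is 1-distance-balanced if and only if either Γ is regular, or Γ is biregular with |N(u)| = |Y|/2 for every u ∈ X and |N(v)| = |X|/2 for every v ∈ Y. -/
open SimpleGraph

section Aux

variable {V : Type*} (G : SimpleGraph V) (X Y : Set V) [DecidablePred (· ∈ X)]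

/-- parity along a walk -/
private lemma walk_parity_s10
    (hbip : ∀ u v : V, G.Adj u v → ((u ∈ X ∧ v ∈ Y) ∨ (u ∈ Y ∧ v ∈ X)))
    (hdisj : Disjoint X Y) :
    ∀ {a b : V} (p : G.Walk a b),
      ((if a ∈ X then 0 else 1) + p.length) % 2 = (if b ∈ X then 0 else 1) % 2 := by
  intro a b p
  induction p with
  | nil => rfl
  | @cons a m b h q ih =>
    have hsides : (a ∈ X ∧ m ∉ X) ∨ (a ∉ X ∧ m ∈ X) := by
      rcases hbip a m h with ⟨ha, hm⟩ | ⟨ha, hm⟩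
      · exact Or.inl ⟨ha, fun hmX => hdisj.ne_of_mem hmX hm rfl⟩
      · exact Or.inr ⟨fun haX => hdisj.ne_of_mem haX ha rfl, hm⟩
    rw [SimpleGraph.Walk.length_cons]
    rcases hsides with ⟨ha, hm⟩ | ⟨ha, hm⟩ <;>
      simp only [if_pos, if_neg, ha, hm, ite_true, ite_false] at ih ⊢ <;> omega

private lemma dist_parity_s10 (hc : G.Connected)
    (hbip : ∀ u v : V, G.Adj u v → ((u ∈ X ∧ v ∈ Y) ∨ (u ∈ Y ∧ v ∈ X)))
    (hdisj : Disjoint X Y) (a b : V) :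
    ((if a ∈ X then 0 else 1) + G.dist a b) % 2 = (if b ∈ X then 0 else 1) % 2 := by
  obtain ⟨p, hp⟩ := hc.exists_walk_length_eq_dist a b
  rw [← hp]
  exact walk_parity_s10 G X Y hbip hdisj p

private lemma dist_adj_ne (hc : G.Connected)
    (hbip : ∀ u v : V, G.Adj u v → ((u ∈ X ∧ v ∈ Y) ∨ (u ∈ Y ∧ v ∈ X)))
    (hdisj : Disjoint X Y) {u v : V} (h : G.Adj u v) (w : V) :
    G.dist u w ≠ G.dist v w := by
  have h1 := dist_parity_s10 G X Y hc hbip hdisj u w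
  have h2 := dist_parity_s10 G X Y hc hbip hdisj v w
  have hsides : (u ∈ X ∧ v ∉ X) ∨ (u ∉ X ∧ v ∈ X) := by
    rcases hbip u v h with ⟨ha, hm⟩ | ⟨ha, hm⟩
    · exact Or.inl ⟨ha, fun hmX => hdisj.ne_of_mem hmX hm rfl⟩
    · exact Or.inr ⟨fun haX => hdisj.ne_of_mem haX ha rfl, hm⟩
  rcases hsides with ⟨ha, hm⟩ | ⟨ha, hm⟩ <;>
    simp only [if_pos, if_neg, ha, hm, ite_true, ite_false] at h1 h2 <;>
    split_ifs at h1 h2 <;> omega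

/-- the key structural lemma -/
private lemma wSet_inter (hc : G.Connected) (h3 : ∀ a b : V, G.dist a b ≤ 3)
    (hbip : ∀ u v : V, G.Adj u v → ((u ∈ X ∧ v ∈ Y) ∨ (u ∈ Y ∧ v ∈ X)))
    (hdisj : Disjoint X Y) {u v : V} (hu : u ∈ X) (hv : v ∈ Y) (h : G.Adj u v) :
    wSet G v u ∩ X = G.neighborSet v \ {u} := by
  have hvX : v ∉ X := fun hvX => hdisj.ne_of_mem hvX hv rfl
  ext w
  by_cases hw : w ∈ X
  · have hpar := dist_parity_s10 G X Y hc hbip hdisj v w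
    rw [if_neg hvX, if_pos hw] at hpar
    have hne := dist_adj_ne G X Y hc hbip hdisj h w
    have ht1 : G.dist u w ≤ G.dist u v + G.dist v w := hc.dist_triangle
    have ht2 : G.dist v w ≤ G.dist v u + G.dist u w := hc.dist_triangle
    have huv : G.dist u v = 1 := SimpleGraph.dist_eq_one_iff_adj.mpr h
    have hvu : G.dist v u = 1 := SimpleGraph.dist_eq_one_iff_adj.mpr h.symm
    rw [huv] at ht1; rw [hvu] at ht2
    have hA : G.Adj v w ↔ G.dist v w = 1 := SimpleGraph.dist_eq_one_iff_adj.symm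
    have hU : w = u ↔ G.dist u w = 0 := by
      rw [hc.dist_eq_zero_iff]; exact eq_comm
    simp only [wSet, Set.mem_inter_iff, Set.mem_setOf_eq, Set.mem_diff,
      SimpleGraph.mem_neighborSet, Set.mem_singleton_iff, hA, hU]
    have h3u := h3 u w
    have h3v := h3 v w
    constructor
    · rintro ⟨hlt, -⟩; omega
    · rintro ⟨h1, h0⟩
      refine ⟨by omega, hw⟩
  · simp only [wSet, Set.mem_inter_iff, Set.mem_setOf_eq, Set.mem_diff,
      SimpleGraph.mem_neighborSet, Set.mem_singleton_iff]
    constructor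
    · rintro ⟨-, hwX⟩; exact absurd hwX hw
    · rintro ⟨hadj, -⟩
      rcases hbip v w hadj with ⟨hvX', -⟩ | ⟨-, hwX⟩
      · exact absurd hvX' hvX
      · exact absurd hwX hw

end Aux

section Aux2

variable {V : Type*} [Fintype V] (G : SimpleGraph V) (X Y : Set V) [DecidablePred (· ∈ X)]
  [DecidablePred (· ∈ Y)]

private lemma balanced_iff (hc : G.Connected) (h3 : ∀ a b : V, G.dist a b ≤ 3)
    (hunion : X ∪ Y = Set.univ) (hdisj : Disjoint X Y)
    (hbip : ∀ u v : V, G.Adj u v → ((u ∈ X ∧ v ∈ Y) ∨ (u ∈ Y ∧ v ∈ X)))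
    {u v : V} (hu : u ∈ X) (hv : v ∈ Y) (h : G.Adj u v) :
    IsBalancedPair G u v ↔
      X.ncard + 2 * (G.neighborSet u).ncard = Y.ncard + 2 * (G.neighborSet v).ncard := by
  have hbip' : ∀ u v : V, G.Adj u v → ((u ∈ Y ∧ v ∈ X) ∨ (u ∈ X ∧ v ∈ Y)) :=
    fun a b hab => (hbip a b hab).symm
  have hqX : wSet G v u ∩ X = G.neighborSet v \ {u} :=
    wSet_inter G X Y hc h3 hbip hdisj hu hv h
  have hpY : wSet G u v ∩ Y = G.neighborSet u \ {v} :=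
    wSet_inter G Y X hc h3 hbip' hdisj.symm hv hu h.symm
  -- every vertex is in exactly one of the two wSets
  have htri : ∀ w : V, (w ∈ wSet G u v ∧ w ∉ wSet G v u) ∨ (w ∉ wSet G u v ∧ w ∈ wSet G v u) := by
    intro w
    have := dist_adj_ne G X Y hc hbip hdisj h w
    simp only [wSet, Set.mem_setOf_eq]
    omega
  have hdisjW : Disjoint (wSet G u v) (wSet G v u) := by
    rw [Set.disjoint_left]
    intro w hw1 hw2
    rcases htri w with ⟨-, h2⟩ | ⟨h1, -⟩
    · exact h2 hw2
    · exact h1 hw1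
  have hXsplit : (wSet G u v ∩ X) ∪ (wSet G v u ∩ X) = X := by
    ext w
    simp only [Set.mem_union, Set.mem_inter_iff]
    constructor
    · rintro (⟨-, hw⟩ | ⟨-, hw⟩) <;> exact hw
    · intro hw
      rcases htri w with ⟨h1, -⟩ | ⟨-, h2⟩
      · exact Or.inl ⟨h1, hw⟩
      · exact Or.inr ⟨h2, hw⟩
  have hYsplit : (wSet G u v ∩ Y) ∪ (wSet G v u ∩ Y) = Y := by
    ext w
    simp only [Set.mem_union, Set.mem_inter_iff]
    constructor
    · rintro (⟨-, hw⟩ | ⟨-, hw⟩) <;> exact hw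
    · intro hw
      rcases htri w with ⟨h1, -⟩ | ⟨-, h2⟩
      · exact Or.inl ⟨h1, hw⟩
      · exact Or.inr ⟨h2, hw⟩
  have hXcard : (wSet G u v ∩ X).ncard + (wSet G v u ∩ X).ncard = X.ncard := by
    rw [← Set.ncard_union_eq (hdisjW.mono Set.inter_subset_left Set.inter_subset_left), hXsplit]
  have hYcard : (wSet G u v ∩ Y).ncard + (wSet G v u ∩ Y).ncard = Y.ncard := by
    rw [← Set.ncard_union_eq (hdisjW.mono Set.inter_subset_left Set.inter_subset_left), hYsplit]
  have hp : (wSet G u v).ncard = (wSet G u v ∩ X).ncard + (wSet G u v ∩ Y).ncard := by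
    rw [← Set.ncard_union_eq (hdisj.mono Set.inter_subset_right Set.inter_subset_right),
      ← Set.inter_union_distrib_left, hunion, Set.inter_univ]
  have hq : (wSet G v u).ncard = (wSet G v u ∩ X).ncard + (wSet G v u ∩ Y).ncard := by
    rw [← Set.ncard_union_eq (hdisj.mono Set.inter_subset_right Set.inter_subset_right),
      ← Set.inter_union_distrib_left, hunion, Set.inter_univ]
  have hb : (wSet G v u ∩ X).ncard + 1 = (G.neighborSet v).ncard := by
    rw [hqX]; exact Set.ncard_diff_singleton_add_one h.symm
  have ha : (wSet G u v ∩ Y).ncard + 1 = (G.neighborSet u).ncard := by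
    rw [hpY]; exact Set.ncard_diff_singleton_add_one h
  unfold IsBalancedPair
  omega

private lemma sum_degrees
    (h1 : ∀ a ∈ X, ∀ b, G.Adj a b → b ∈ Y) (h2 : ∀ b ∈ Y, ∀ a, G.Adj b a → a ∈ X) :
    ∑ u ∈ X.toFinite.toFinset, (G.neighborSet u).ncard
      = ∑ v ∈ Y.toFinite.toFinset, (G.neighborSet v).ncard := by
  classical
  have key : ∀ (u : V) (S : Set V), (∀ b, G.Adj u b → b ∈ S) →
      (G.neighborSet u).ncard = (S.toFinite.toFinset.filter (fun w => G.Adj u w)).card := by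
    intro u S hS
    rw [Set.ncard_eq_toFinset_card _ (Set.toFinite _)]
    congr 1
    ext w
    simp only [Set.Finite.mem_toFinset, SimpleGraph.mem_neighborSet, Finset.mem_filter]
    exact ⟨fun hw => ⟨hS w hw, hw⟩, fun hw => hw.2⟩
  calc ∑ u ∈ X.toFinite.toFinset, (G.neighborSet u).ncard
      = ∑ u ∈ X.toFinite.toFinset, ∑ w ∈ Y.toFinite.toFinset, (if G.Adj u w then 1 else 0) := by
        refine Finset.sum_congr rfl fun u hu => ?_
        rw [key u Y (h1 u (X.toFinite.mem_toFinset.mp hu)), Finset.card_filter]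
    _ = ∑ w ∈ Y.toFinite.toFinset, ∑ u ∈ X.toFinite.toFinset, (if G.Adj u w then 1 else 0) :=
        Finset.sum_comm
    _ = ∑ v ∈ Y.toFinite.toFinset, (G.neighborSet v).ncard := by
        refine Finset.sum_congr rfl fun w hw => ?_
        rw [key w X (h2 w (Y.toFinite.mem_toFinset.mp hw)), Finset.card_filter]
        refine Finset.sum_congr rfl fun u _ => ?_
        simp only [G.adj_comm]

end Aux2

theorem statement_10 {V : Type*} [Fintype V] (G : SimpleGraph V) (hc : G.Connected)
    (hdiam : G.diam = 3) (X Y : Set V)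
    (hunion : X ∪ Y = Set.univ) (hdisj : Disjoint X Y)
    (hbip : ∀ u v : V, G.Adj u v → ((u ∈ X ∧ v ∈ Y) ∨ (u ∈ Y ∧ v ∈ X))) :
    IsDistBalanced G 1 ↔
      ((∃ r : ℕ, ∀ v : V, (G.neighborSet v).ncard = r) ∨
       (X.ncard ≠ Y.ncard ∧
        (∀ u ∈ X, 2 * (G.neighborSet u).ncard = Y.ncard) ∧
        (∀ v ∈ Y, 2 * (G.neighborSet v).ncard = X.ncard))) := by
  classical
  have hV : Nonempty V := hc.nonempty
  have hne_top : G.ediam ≠ ⊤ := SimpleGraph.ediam_ne_top_of_diam_ne_zero (by rw [hdiam]; omega)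
  have h3 : ∀ a b : V, G.dist a b ≤ 3 := fun a b => hdiam ▸ SimpleGraph.dist_le_diam hne_top
  have hbip' : ∀ u v : V, G.Adj u v → ((u ∈ Y ∧ v ∈ X) ∨ (u ∈ X ∧ v ∈ Y)) :=
    fun a b hab => (hbip a b hab).symm
  have hunion' : Y ∪ X = Set.univ := by rw [Set.union_comm]; exact hunion
  have h1 : ∀ a ∈ X, ∀ b, G.Adj a b → b ∈ Y := by
    intro a ha b hab
    rcases hbip a b hab with ⟨-, hbY⟩ | ⟨haY, -⟩
    · exact hbY
    · exact absurd rfl (hdisj.ne_of_mem ha haY)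
  have h2 : ∀ b ∈ Y, ∀ a, G.Adj b a → a ∈ X := by
    intro b hbY a hab
    rcases hbip b a hab with ⟨hbX, -⟩ | ⟨-, haX⟩
    · exact absurd rfl (hdisj.ne_of_mem hbX hbY)
    · exact haX
  -- find an edge with specified sides
  obtain ⟨u₀, v₀, hd⟩ := G.exists_dist_eq_diam
  rw [hdiam] at hd
  obtain ⟨p, hp⟩ := SimpleGraph.exists_walk_of_dist_ne_zero
    (show G.dist u₀ v₀ ≠ 0 by rw [hd]; omega)
  obtain ⟨x₀, y₀, hx₀, hy₀, hxy₀⟩ : ∃ x₀ y₀ : V, x₀ ∈ X ∧ y₀ ∈ Y ∧ G.Adj x₀ y₀ := by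
    cases p with
    | nil => rw [SimpleGraph.dist_self] at hd; omega
    | cons h q =>
      rcases hbip _ _ h with ⟨ha, hb⟩ | ⟨ha, hb⟩
      · exact ⟨_, _, ha, hb, h⟩
      · exact ⟨_, _, hb, ha, h.symm⟩
  have hy₀X : y₀ ∉ X := fun hx => hdisj.ne_of_mem hx hy₀ rfl
  constructor
  · intro hb
    have hedge : ∀ a b : V, G.Adj a b → a ∈ X → b ∈ Y →
        X.ncard + 2 * (G.neighborSet a).ncard = Y.ncard + 2 * (G.neighborSet b).ncard :=
      fun a b hab ha hbY =>
        (balanced_iff G X Y hc h3 hunion hdisj hbip ha hbY hab).mp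
          (hb a b (SimpleGraph.dist_eq_one_iff_adj.mpr hab))
    set g : V → ℕ :=
      fun w => 2 * (G.neighborSet w).ncard + (if w ∈ X then X.ncard else Y.ncard) with hg
    have hgadj : ∀ a b : V, G.Adj a b → g a = g b := by
      intro a b hab
      rcases hbip a b hab with ⟨ha, hbY⟩ | ⟨ha, hbX⟩
      · have hbX : b ∉ X := fun hx => hdisj.ne_of_mem hx hbY rfl
        have := hedge a b hab ha hbY
        simp only [hg, if_pos ha, if_neg hbX]
        omega
      · have haX : a ∉ X := fun hx => hdisj.ne_of_mem hx ha rfl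
        have := hedge b a hab.symm hbX ha
        simp only [hg, if_pos hbX, if_neg haX]
        omega
    have hgwalk : ∀ {a b : V} (p : G.Walk a b), g a = g b := by
      intro a b p
      induction p with
      | nil => rfl
      | cons h q ih => exact (hgadj _ _ h).trans ih
    have hgconst : ∀ a b : V, g a = g b := fun a b => (hc.preconnected a b).elim fun p => hgwalk p
    have hdegX : ∀ w ∈ X, (G.neighborSet w).ncard = (G.neighborSet x₀).ncard := by
      intro w hw
      have := hgconst w x₀
      simp only [hg, if_pos hw, if_pos hx₀] at this
      omega
    have hdegY : ∀ w ∈ Y, (G.neighborSet w).ncard = (G.neighborSet y₀).ncard := by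
      intro w hw
      have hwX : w ∉ X := fun hx => hdisj.ne_of_mem hx hw rfl
      have := hgconst w y₀
      simp only [hg, if_neg hwX, if_neg hy₀X] at this
      omega
    have hkey := hedge x₀ y₀ hxy₀ hx₀ hy₀
    by_cases hxy : X.ncard = Y.ncard
    · left
      refine ⟨(G.neighborSet x₀).ncard, fun w => ?_⟩
      have hw : w ∈ X ∨ w ∈ Y := by
        have hwu : w ∈ X ∪ Y := by rw [hunion]; trivial
        exact hwu
      rcases hw with hw | hw
      · exact hdegX w hw
      · rw [hdegY w hw]; omega
    · right
      have hsum := sum_degrees G X Y h1 h2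
      have hsX : ∑ u ∈ X.toFinite.toFinset, (G.neighborSet u).ncard
          = X.ncard * (G.neighborSet x₀).ncard := by
        rw [Finset.sum_congr rfl (fun w hw => hdegX w (X.toFinite.mem_toFinset.mp hw)),
          Finset.sum_const, smul_eq_mul, ← Set.ncard_eq_toFinset_card X X.toFinite]
      have hsY : ∑ v ∈ Y.toFinite.toFinset, (G.neighborSet v).ncard
          = Y.ncard * (G.neighborSet y₀).ncard := by
        rw [Finset.sum_congr rfl (fun w hw => hdegY w (Y.toFinite.mem_toFinset.mp hw)),
          Finset.sum_const, smul_eq_mul, ← Set.ncard_eq_toFinset_card Y Y.toFinite]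
      rw [hsX, hsY] at hsum
      have hz : ((2 : ℤ) * (G.neighborSet y₀).ncard - X.ncard) * ((Y.ncard : ℤ) - X.ncard) = 0 := by
        have k1 : (X.ncard : ℤ) + 2 * (G.neighborSet x₀).ncard
            = Y.ncard + 2 * (G.neighborSet y₀).ncard := by exact_mod_cast hkey
        have k2 : (X.ncard : ℤ) * (G.neighborSet x₀).ncard
            = Y.ncard * (G.neighborSet y₀).ncard := by exact_mod_cast hsum
        linear_combination (X.ncard : ℤ) * k1 - 2 * k2
      have hb2 : 2 * (G.neighborSet y₀).ncard = X.ncard := by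
        rcases mul_eq_zero.mp hz with hz1 | hz2
        · have : (2 : ℤ) * (G.neighborSet y₀).ncard = X.ncard := by linarith
          exact_mod_cast this
        · exfalso
          apply hxy
          have : (X.ncard : ℤ) = Y.ncard := by linarith
          exact_mod_cast this
      have ha2 : 2 * (G.neighborSet x₀).ncard = Y.ncard := by omega
      refine ⟨hxy, fun u hu => ?_, fun v hv => ?_⟩
      · rw [hdegX u hu]; omega
      · rw [hdegY v hv]; omega
  · intro h u v hdist
    have hadj := SimpleGraph.dist_eq_one_iff_adj.mp hdist
    rcases h with ⟨r, hr⟩ | ⟨hxy, hdX, hdY⟩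
    · -- regular case: first show |X| = |Y|
      have hx_eq_y : X.ncard = Y.ncard := by
        have hsum := sum_degrees G X Y h1 h2
        rw [Finset.sum_congr rfl (fun w _ => hr w), Finset.sum_const, smul_eq_mul,
          ← Set.ncard_eq_toFinset_card X X.toFinite] at hsum
        rw [Finset.sum_congr rfl (fun w _ => hr w), Finset.sum_const, smul_eq_mul,
          ← Set.ncard_eq_toFinset_card Y Y.toFinite] at hsum
        have hr1 : 0 < r := by
          rw [← hr x₀]
          exact (Set.ncard_pos (Set.toFinite _)).mpr ⟨y₀, hxy₀⟩
        exact Nat.eq_of_mul_eq_mul_right hr1 hsum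
      rcases hbip u v hadj with ⟨hu, hv⟩ | ⟨hu, hv⟩
      · exact (balanced_iff G X Y hc h3 hunion hdisj hbip hu hv hadj).mpr
          (by rw [hr u, hr v, hx_eq_y])
      · exact (balanced_iff G Y X hc h3 hunion' hdisj.symm hbip' hu hv hadj).mpr
          (by rw [hr u, hr v, hx_eq_y])
    · rcases hbip u v hadj with ⟨hu, hv⟩ | ⟨hu, hv⟩
      · refine (balanced_iff G X Y hc h3 hunion hdisj hbip hu hv hadj).mpr ?_
        have e1 := hdX u hu
        have e2 := hdY v hv
        omega
      · refine (balanced_iff G Y X hc h3 hunion' hdisj.symm hbip' hu hv hadj).mpr ?_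
        have e1 := hdY u hu
        have e2 := hdX v hv
        omega
end

section
/- Let Γ be a connected bipartite finite simple graph of diameter 3 with bipartition sets X and Y. Then Γ is 3-distance-balanced if and only if for every pair of vertices u ∈ X and v ∈ Y with d(u,v) = 3 the equality 2|N(u)| + |X| = 2|N(v)| + |Y| holds. -/
open SimpleGraph

section Aux

variable {V : Type*}

lemma walk_parity' (G : SimpleGraph V) (X : Set V)
    (hadj : ∀ u v : V, G.Adj u v → (u ∈ X ↔ v ∉ X)) :
    ∀ {a b : V} (p : G.Walk a b), ((a ∈ X) ↔ (b ∈ X)) ↔ Even p.length := by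
  intro a b p
  induction p with
  | nil => simp
  | cons h q ih =>
    simp only [SimpleGraph.Walk.length_cons, Nat.even_add_one, ← ih]
    have := hadj _ _ h
    tauto

lemma dist_parity' (G : SimpleGraph V) (hc : G.Connected) (X : Set V)
    (hadj : ∀ u v : V, G.Adj u v → (u ∈ X ↔ v ∉ X)) (a b : V) :
    ((a ∈ X) ↔ (b ∈ X)) ↔ Even (G.dist a b) := by
  obtain ⟨p, hp⟩ := hc.exists_walk_length_eq_dist a b
  rw [← hp]
  exact walk_parity' G X hadj p

lemma key_balanced_s12 [Fintype V] (G : SimpleGraph V) (hc : G.Connected)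
    (hled : ∀ a b : V, G.dist a b ≤ 3) (X : Set V)
    (hadj : ∀ a b : V, G.Adj a b → (a ∈ X ↔ b ∉ X))
    {u v : V} (hu : u ∈ X) (hv : v ∉ X) (hd : G.dist u v = 3) :
    IsBalancedPair G u v ↔
      2 * (G.neighborSet u).ncard + X.ncard
        = 2 * (G.neighborSet v).ncard + (Xᶜ : Set V).ncard := by
  classical
  have hNu : G.neighborSet u ⊆ Xᶜ := fun w hw => (hadj u w hw).mp hu
  have hNv : G.neighborSet v ⊆ X := by
    intro w hw
    by_contra hwX
    exact hv ((hadj v w hw).mpr hwX)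
  have htri : ∀ w, 3 ≤ G.dist u w + G.dist v w := by
    intro w
    have h := hc.dist_triangle (u := u) (v := w) (w := v)
    rw [hd, SimpleGraph.dist_comm (u := w) (v := v)] at h
    omega
  have hparity := dist_parity' G hc X hadj
  have hEq1 : wSet G u v = (X \ G.neighborSet v) ∪ G.neighborSet u := by
    ext w
    have h1 := hled u w
    have h2 := hled v w
    have h3 := htri w
    simp only [wSet, Set.mem_setOf_eq, Set.mem_union, Set.mem_diff, mem_neighborSet,
      ← SimpleGraph.dist_eq_one_iff_adj]
    by_cases hw : w ∈ X
    · have heu : Even (G.dist u w) := (hparity u w).mp (iff_of_true hu hw)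
      have hev : ¬ Even (G.dist v w) := fun h => hv (((hparity v w).mpr h).mpr hw)
      rw [Nat.even_iff] at heu
      rw [Nat.not_even_iff] at hev
      simp only [hw, true_and]
      omega
    · have heu : ¬ Even (G.dist u w) := fun h => hw (((hparity u w).mpr h).mp hu)
      have hev : Even (G.dist v w) := (hparity v w).mp (iff_of_false hv hw)
      rw [Nat.even_iff] at hev
      rw [Nat.not_even_iff] at heu
      simp only [hw, false_and, false_or]
      omega
  have hEq2 : wSet G v u = G.neighborSet v ∪ ((Xᶜ : Set V) \ G.neighborSet u) := by
    ext w
    have h1 := hled u w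
    have h2 := hled v w
    have h3 := htri w
    simp only [wSet, Set.mem_setOf_eq, Set.mem_union, Set.mem_diff, mem_neighborSet,
      Set.mem_compl_iff, ← SimpleGraph.dist_eq_one_iff_adj]
    by_cases hw : w ∈ X
    · have heu : Even (G.dist u w) := (hparity u w).mp (iff_of_true hu hw)
      have hev : ¬ Even (G.dist v w) := fun h => hv (((hparity v w).mpr h).mpr hw)
      rw [Nat.even_iff] at heu
      rw [Nat.not_even_iff] at hev
      simp only [hw, not_true, false_and, or_false]
      omega
    · have heu : ¬ Even (G.dist u w) := fun h => hw (((hparity u w).mpr h).mp hu)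
      have hev : Even (G.dist v w) := (hparity v w).mp (iff_of_false hv hw)
      rw [Nat.even_iff] at hev
      rw [Nat.not_even_iff] at heu
      simp only [hw, not_false_iff, true_and]
      omega
  have hdisj1 : Disjoint (X \ G.neighborSet v) (G.neighborSet u) :=
    Set.disjoint_left.mpr fun w hw1 hw2 => (hNu hw2) hw1.1
  have hdisj2 : Disjoint (G.neighborSet v) ((Xᶜ : Set V) \ G.neighborSet u) :=
    Set.disjoint_left.mpr fun w hw1 hw2 => hw2.1 (hNv hw1)
  have c1 : (wSet G u v).ncard
      = X.ncard - (G.neighborSet v).ncard + (G.neighborSet u).ncard := by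
    rw [hEq1, Set.ncard_union_eq hdisj1 (Set.toFinite _) (Set.toFinite _),
      Set.ncard_diff hNv (Set.toFinite _)]
  have c2 : (wSet G v u).ncard
      = (G.neighborSet v).ncard + ((Xᶜ : Set V).ncard - (G.neighborSet u).ncard) := by
    rw [hEq2, Set.ncard_union_eq hdisj2 (Set.toFinite _) (Set.toFinite _),
      Set.ncard_diff hNu (Set.toFinite _)]
  have hle1 : (G.neighborSet v).ncard ≤ X.ncard := Set.ncard_le_ncard hNv (Set.toFinite _)
  have hle2 : (G.neighborSet u).ncard ≤ (Xᶜ : Set V).ncard :=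
    Set.ncard_le_ncard hNu (Set.toFinite _)
  unfold IsBalancedPair
  rw [c1, c2]
  omega

end Aux

theorem statement_12 {V : Type*} [Fintype V] (G : SimpleGraph V) (hc : G.Connected)
    (hdiam : G.diam = 3) (X Y : Set V)
    (hunion : X ∪ Y = Set.univ) (hdisj : Disjoint X Y)
    (hbip : ∀ u v : V, G.Adj u v → ((u ∈ X ∧ v ∈ Y) ∨ (u ∈ Y ∧ v ∈ X))) :
    IsDistBalanced G 3 ↔
      (∀ u ∈ X, ∀ v ∈ Y, G.dist u v = 3 →
        2 * (G.neighborSet u).ncard + X.ncard = 2 * (G.neighborSet v).ncard + Y.ncard) := by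
  classical
  have hY : ∀ w : V, w ∈ Y ↔ w ∉ X := by
    intro w
    constructor
    · intro hw hx
      exact Set.disjoint_left.mp hdisj hx hw
    · intro hx
      have hw : w ∈ X ∪ Y := hunion ▸ Set.mem_univ w
      rcases hw with h | h
      · exact absurd h hx
      · exact h
  have hYc : Y = (Xᶜ : Set V) := by
    ext w
    simp [hY w]
  have hadj : ∀ a b : V, G.Adj a b → (a ∈ X ↔ b ∉ X) := by
    intro a b h
    rcases hbip a b h with ⟨h1, h2⟩ | ⟨h1, h2⟩
    · exact iff_of_true h1 ((hY b).mp h2)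
    · exact iff_of_false ((hY a).mp h1) (not_not_intro h2)
  have hnt : G.ediam ≠ ⊤ := ediam_ne_top_of_diam_ne_zero (by rw [hdiam]; norm_num)
  have hled : ∀ a b : V, G.dist a b ≤ 3 := fun a b => hdiam ▸ dist_le_diam hnt
  constructor
  · intro hbal u hu v hv hd
    rw [hYc]
    exact (key_balanced_s12 G hc hled X hadj hu ((hY v).mp hv) hd).mp (hbal u v hd)
  · intro h u v hd
    have hodd : ¬ ((u ∈ X) ↔ (v ∈ X)) := by
      rw [dist_parity' G hc X hadj u v, hd]
      decide
    by_cases hu : u ∈ X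
    · have hv : v ∉ X := fun hv => hodd (iff_of_true hu hv)
      refine (key_balanced_s12 G hc hled X hadj hu hv hd).mpr ?_
      have := h u hu v ((hY v).mpr hv) hd
      rwa [hYc] at this
    · have hv : v ∈ X := by tauto
      have hd' : G.dist v u = 3 := by rw [SimpleGraph.dist_comm]; exact hd
      have h2 := h v hv u ((hY u).mpr hu) hd'
      rw [hYc] at h2
      exact ((key_balanced_s12 G hc hled X hadj hv hu hd').mpr h2).symm
end

section
/- Let Γ be a connected bipartite finite simple graph of diameter 3 with bipartition sets X and Y. Then Γ is highly distance-balanced if and only if either Γ is regular, or Γ is biregular with every vertex of X having degree |Y|/2 and every vertex of Y having degree |X|/2. -/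
open SimpleGraph

section Aux
set_option linter.unusedSectionVars false
variable {V : Type*} [Fintype V] {G : SimpleGraph V}

lemma walk_parity_s13 (f : V → ZMod 2) (hf : ∀ u v : V, G.Adj u v → f v = f u + 1)
    {u v : V} (p : G.Walk u v) : f v = f u + p.length := by
  induction p with
  | nil => simp
  | @cons a b c h p ih =>
    rw [Walk.length_cons]
    push_cast
    rw [ih, hf _ _ h]; ring

lemma dist_parity_s13 (hc : G.Connected) (f : V → ZMod 2)
    (hf : ∀ u v : V, G.Adj u v → f v = f u + 1) (u v : V) :
    f v = f u + (G.dist u v : ZMod 2) := by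
  obtain ⟨p, hp⟩ := hc.exists_walk_length_eq_dist u v
  rw [← hp]; exact walk_parity_s13 f hf p

lemma dist_cross (hc : G.Connected) (hdle : ∀ a b : V, G.dist a b ≤ 3)
    (f : V → ZMod 2) (hf : ∀ u v : V, G.Adj u v → f v = f u + 1)
    {u v : V} (h : f u ≠ f v) (hna : ¬ G.Adj u v) : G.dist u v = 3 := by
  have hp := dist_parity_s13 hc f hf u v
  have hodd : ¬ (2 ∣ G.dist u v) := by
    intro hdvd
    apply h
    have h0 : ((G.dist u v : ℕ) : ZMod 2) = 0 :=
      (ZMod.natCast_eq_zero_iff _ 2).mpr hdvd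
    rw [h0, add_zero] at hp
    exact hp.symm
  have h1 : G.dist u v ≠ 1 := fun h1 => hna (dist_eq_one_iff_adj.mp h1)
  have := hdle u v
  omega

lemma dist_same (hc : G.Connected) (hdle : ∀ a b : V, G.dist a b ≤ 3)
    (f : V → ZMod 2) (hf : ∀ u v : V, G.Adj u v → f v = f u + 1)
    {u v : V} (h : f u = f v) (hne : u ≠ v) : G.dist u v = 2 := by
  have hp := dist_parity_s13 hc f hf u v
  have heven : 2 ∣ G.dist u v := by
    by_contra hdvd
    obtain ⟨k, hk⟩ : ∃ k, G.dist u v = 2 * k + 1 := ⟨G.dist u v / 2, by omega⟩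
    have h1 : ((G.dist u v : ℕ) : ZMod 2) = 1 := by
      rw [hk]
      push_cast
      have h2 : (2 : ZMod 2) = 0 := by decide
      rw [h2, zero_mul, zero_add]
    rw [h1, h] at hp
    exact one_ne_zero (left_eq_add.mp hp)
  have hpos : G.dist u v ≠ 0 := by
    rw [SimpleGraph.dist_ne_zero_iff_ne_and_reachable]
    exact ⟨hne, hc.preconnected u v⟩
  have := hdle u v
  omega

/-- The parity function attached to a bipartition. -/
lemma bip_package (G : SimpleGraph V) (X Y : Set V) (hunion : X ∪ Y = Set.univ)
    (hdisj : Disjoint X Y)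
    (hbip : ∀ u v : V, G.Adj u v → ((u ∈ X ∧ v ∈ Y) ∨ (u ∈ Y ∧ v ∈ X))) :
    ∃ f : V → ZMod 2, (∀ u v : V, G.Adj u v → f v = f u + 1) ∧
      (∀ w : V, w ∈ X ↔ f w = 0) ∧ (∀ w : V, w ∈ Y ↔ f w = 1) := by
  classical
  have hmem : ∀ w : V, w ∉ X ↔ w ∈ Y := by
    intro w
    constructor
    · intro h
      have hw : w ∈ X ∪ Y := by rw [hunion]; exact Set.mem_univ w
      exact hw.resolve_left h
    · intro h hX
      exact Set.disjoint_left.mp hdisj hX h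
  refine ⟨fun w => if w ∈ X then 0 else 1, ?_, fun w => ?_, fun w => ?_⟩
  · intro a b h
    show (if b ∈ X then (0 : ZMod 2) else 1) = (if a ∈ X then (0 : ZMod 2) else 1) + 1
    rcases hbip a b h with ⟨h1, h2⟩ | ⟨h1, h2⟩
    · rw [if_pos h1, if_neg ((hmem b).mpr h2)]
      decide
    · rw [if_pos h2, if_neg ((hmem a).mpr h1)]
      decide
  · show w ∈ X ↔ (if w ∈ X then (0 : ZMod 2) else 1) = 0
    by_cases hw : w ∈ X <;> simp [hw]
  · show w ∈ Y ↔ (if w ∈ X then (0 : ZMod 2) else 1) = 1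
    by_cases hw : w ∈ X
    · have hnY : ¬ w ∈ Y := fun h => Set.disjoint_left.mp hdisj hw h
      simp [hw, hnY]
    · simp [hw, (hmem w).mp hw]

lemma cross_wset (G : SimpleGraph V) (hc : G.Connected) (hdle : ∀ a b : V, G.dist a b ≤ 3)
    (X Y : Set V) (hunion : X ∪ Y = Set.univ) (hdisj : Disjoint X Y)
    (hbip : ∀ u v : V, G.Adj u v → ((u ∈ X ∧ v ∈ Y) ∨ (u ∈ Y ∧ v ∈ X)))
    {u v : V} (hu : u ∈ X) (hv : v ∈ Y) :
    (wSet G u v).ncard + (G.neighborSet v).ncard = X.ncard + (G.neighborSet u).ncard := by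
  obtain ⟨f, hf, hfX, hfY⟩ := bip_package G X Y hunion hdisj hbip
  have hXY : ∀ w : V, w ∈ X → w ∉ Y := fun w hw h => Set.disjoint_left.mp hdisj hw h
  have hYX : ∀ w : V, w ∈ Y → w ∉ X := fun w hw h => Set.disjoint_left.mp hdisj h hw
  have hfXY : ∀ w : V, w ∉ X → w ∈ Y := by
    intro w h
    have hw : w ∈ X ∪ Y := by rw [hunion]; exact Set.mem_univ w
    exact hw.resolve_left h
  have hNu : G.neighborSet u ⊆ Y := by
    intro w hw
    rcases hbip u w hw with ⟨-, h2⟩ | ⟨h1, -⟩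
    · exact h2
    · exact absurd hu (hYX u h1)
  have hNv : G.neighborSet v ⊆ X := by
    intro w hw
    rcases hbip v w hw with ⟨h1, -⟩ | ⟨-, h2⟩
    · exact absurd h1 (hYX v hv)
    · exact h2
  have hne : u ≠ v := fun h => hXY u hu (h ▸ hv)
  -- the set identity
  have hset : wSet G u v = (X \ (G.neighborSet v \ {u})) ∪ (G.neighborSet u \ {v}) := by
    ext w
    simp only [wSet, Set.mem_setOf_eq, Set.mem_union, Set.mem_diff, Set.mem_singleton_iff,
      SimpleGraph.mem_neighborSet]
    by_cases hw : w ∈ X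
    · have hfu : f u = 0 := (hfX u).mp hu
      have hfw : f w = 0 := (hfX w).mp hw
      have hfv : f v = 1 := (hfY v).mp hv
      have hcvw : f v ≠ f w := by rw [hfv, hfw]; exact one_ne_zero
      have hnoadj : ¬ G.Adj u w := by
        intro hadj
        rcases hbip u w hadj with ⟨-, h2⟩ | ⟨h1, -⟩
        · exact hXY w hw h2
        · exact hYX u h1 hu
      rcases eq_or_ne w u with rfl | hwu
      · constructor
        · intro _
          exact Or.inl ⟨hw, fun h' => h'.2 rfl⟩
        · intro _
          rw [SimpleGraph.dist_self]
          exact hc.pos_dist_of_ne (Ne.symm hne)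
      · have hdu : G.dist u w = 2 :=
          dist_same hc hdle f hf (by rw [hfu, hfw]) (Ne.symm hwu)
        by_cases hvw : G.Adj v w
        · have hdv : G.dist v w = 1 := dist_eq_one_iff_adj.mpr hvw
          constructor
          · intro hlt
            rw [hdu, hdv] at hlt
            omega
          · rintro (⟨-, hnot⟩ | ⟨hadj, -⟩)
            · exact absurd ⟨hvw, hwu⟩ hnot
            · exact absurd hadj hnoadj
        · have hdv : G.dist v w = 3 := dist_cross hc hdle f hf hcvw hvw
          constructor
          · intro _
            exact Or.inl ⟨hw, fun h' => hvw h'.1⟩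
          · intro _
            rw [hdu, hdv]
            omega
    · have hwY : w ∈ Y := hfXY w hw
      have hfu : f u = 0 := (hfX u).mp hu
      have hfw : f w = 1 := (hfY w).mp hwY
      have hfv : f v = 1 := (hfY v).mp hv
      have hcuw : f u ≠ f w := by rw [hfu, hfw]; exact zero_ne_one
      rcases eq_or_ne w v with rfl | hwv
      · constructor
        · intro hlt
          rw [SimpleGraph.dist_self] at hlt
          omega
        · rintro (⟨hX', -⟩ | ⟨-, hne'⟩)
          · exact absurd hX' hw
          · exact absurd rfl hne'
      · have hdv : G.dist v w = 2 :=
          dist_same hc hdle f hf (by rw [hfv, hfw]) (Ne.symm hwv)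
        by_cases huw : G.Adj u w
        · have hdu : G.dist u w = 1 := dist_eq_one_iff_adj.mpr huw
          constructor
          · intro _
            exact Or.inr ⟨huw, hwv⟩
          · intro _
            rw [hdu, hdv]
            omega
        · have hdu : G.dist u w = 3 := dist_cross hc hdle f hf hcuw huw
          constructor
          · intro hlt
            rw [hdu, hdv] at hlt
            omega
          · rintro (⟨hX', -⟩ | ⟨hadj, -⟩)
            · exact absurd hX' hw
            · exact absurd hadj huw
  -- cardinality bookkeeping
  have hsub1 : G.neighborSet v \ {u} ⊆ X := (Set.diff_subset).trans hNv
  have hsubB : G.neighborSet u \ {v} ⊆ Y := (Set.diff_subset).trans hNu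
  have hdisjAB : Disjoint (X \ (G.neighborSet v \ {u})) (G.neighborSet u \ {v}) :=
    hdisj.mono Set.diff_subset hsubB
  have hcard : (wSet G u v).ncard =
      (X \ (G.neighborSet v \ {u})).ncard + (G.neighborSet u \ {v}).ncard := by
    rw [hset]
    exact Set.ncard_union_eq hdisjAB (Set.toFinite _) (Set.toFinite _)
  have h1 : (X \ (G.neighborSet v \ {u})).ncard + (G.neighborSet v \ {u}).ncard = X.ncard :=
    Set.ncard_diff_add_ncard_of_subset hsub1 (Set.toFinite _)
  by_cases hadj : G.Adj u v
  · have hu' : {u} ⊆ G.neighborSet v := by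
      intro x hx
      rw [Set.mem_singleton_iff] at hx
      subst hx
      exact hadj.symm
    have hv' : {v} ⊆ G.neighborSet u := fun x hx => by
      rw [Set.mem_singleton_iff] at hx
      subst hx
      exact hadj
    have h2 : (G.neighborSet v \ {u}).ncard + 1 = (G.neighborSet v).ncard := by
      have := Set.ncard_diff_add_ncard_of_subset hu' (Set.toFinite _)
      simpa using this
    have h3 : (G.neighborSet u \ {v}).ncard + 1 = (G.neighborSet u).ncard := by
      have := Set.ncard_diff_add_ncard_of_subset hv' (Set.toFinite _)
      simpa using this
    omega
  · have h2 : G.neighborSet v \ {u} = G.neighborSet v := by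
      apply Set.diff_singleton_eq_self
      rw [SimpleGraph.mem_neighborSet]
      exact fun hx => hadj hx.symm
    have h3 : G.neighborSet u \ {v} = G.neighborSet u := by
      apply Set.diff_singleton_eq_self
      rw [SimpleGraph.mem_neighborSet]
      exact fun hx => hadj hx
    rw [h2] at hcard h1
    rw [h3] at hcard
    omega

lemma same_wset (G : SimpleGraph V) (hc : G.Connected) (hdle : ∀ a b : V, G.dist a b ≤ 3)
    (X Y : Set V) (hunion : X ∪ Y = Set.univ) (hdisj : Disjoint X Y)
    (hbip : ∀ u v : V, G.Adj u v → ((u ∈ X ∧ v ∈ Y) ∨ (u ∈ Y ∧ v ∈ X)))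
    {u w : V} (hu : u ∈ X) (hw : w ∈ X) (hne : u ≠ w) :
    (wSet G u w).ncard = 1 + (G.neighborSet u \ G.neighborSet w).ncard := by
  obtain ⟨f, hf, hfX, hfY⟩ := bip_package G X Y hunion hdisj hbip
  have hXY : ∀ x : V, x ∈ X → x ∉ Y := fun x hx h => Set.disjoint_left.mp hdisj hx h
  have hfXY : ∀ x : V, x ∉ X → x ∈ Y := by
    intro x h
    have hx : x ∈ X ∪ Y := by rw [hunion]; exact Set.mem_univ x
    exact hx.resolve_left h
  have hNu : G.neighborSet u ⊆ Y := by
    intro z hz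
    rcases hbip u z hz with ⟨-, h2⟩ | ⟨h1, -⟩
    · exact h2
    · exact absurd h1 (hXY u hu)
  have hfu : f u = 0 := (hfX u).mp hu
  have hfw : f w = 0 := (hfX w).mp hw
  have hset : wSet G u w = {u} ∪ (G.neighborSet u \ G.neighborSet w) := by
    ext z
    simp only [wSet, Set.mem_setOf_eq, Set.mem_union, Set.mem_diff, Set.mem_singleton_iff,
      SimpleGraph.mem_neighborSet]
    by_cases hz : z ∈ X
    · have hfz : f z = 0 := (hfX z).mp hz
      have hnoadj : ¬ G.Adj u z := by
        intro hadj
        rcases hbip u z hadj with ⟨-, h2⟩ | ⟨h1, -⟩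
        · exact hXY z hz h2
        · exact hXY u hu h1
      rcases eq_or_ne z u with rfl | hzu
      · constructor
        · intro _; exact Or.inl rfl
        · intro _
          rw [SimpleGraph.dist_self]
          have hdw : G.dist w z = 2 := dist_same hc hdle f hf (by rw [hfw, hfz]) (Ne.symm hne)
          omega
      · have hdu : G.dist u z = 2 := dist_same hc hdle f hf (by rw [hfu, hfz]) (Ne.symm hzu)
        constructor
        · intro hlt
          exfalso
          rcases eq_or_ne z w with rfl | hzw
          · rw [SimpleGraph.dist_self, hdu] at hlt; omega
          · have hdw : G.dist w z = 2 := dist_same hc hdle f hf (by rw [hfw, hfz]) (Ne.symm hzw)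
            rw [hdu, hdw] at hlt; omega
        · rintro (h1 | ⟨h1, -⟩)
          · exact absurd h1 hzu
          · exact absurd h1 hnoadj
    · have hzY : z ∈ Y := hfXY z hz
      have hfz : f z = 1 := (hfY z).mp hzY
      have hzu : z ≠ u := fun h => hz (h ▸ hu)
      have hcu : f u ≠ f z := by rw [hfu, hfz]; exact zero_ne_one
      have hcw : f w ≠ f z := by rw [hfw, hfz]; exact zero_ne_one
      by_cases huz : G.Adj u z
      · have hdu : G.dist u z = 1 := dist_eq_one_iff_adj.mpr huz
        by_cases hwz : G.Adj w z
        · have hdw : G.dist w z = 1 := dist_eq_one_iff_adj.mpr hwz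
          constructor
          · intro hlt; rw [hdu, hdw] at hlt; omega
          · rintro (h1 | ⟨-, h2⟩)
            · exact absurd h1 hzu
            · exact absurd hwz h2
        · have hdw : G.dist w z = 3 := dist_cross hc hdle f hf hcw hwz
          constructor
          · intro _; exact Or.inr ⟨huz, hwz⟩
          · intro _; rw [hdu, hdw]; omega
      · have hdu : G.dist u z = 3 := dist_cross hc hdle f hf hcu huz
        constructor
        · intro hlt
          exfalso
          by_cases hwz : G.Adj w z
          · have hdw : G.dist w z = 1 := dist_eq_one_iff_adj.mpr hwz
            rw [hdu, hdw] at hlt; omega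
          · have hdw : G.dist w z = 3 := dist_cross hc hdle f hf hcw hwz
            rw [hdu, hdw] at hlt; omega
        · rintro (h1 | ⟨h1, -⟩)
          · exact absurd h1 hzu
          · exact absurd h1 huz
  have hdisjs : Disjoint ({u} : Set V) (G.neighborSet u \ G.neighborSet w) := by
    rw [Set.disjoint_left]
    intro x hx
    rw [Set.mem_singleton_iff] at hx
    subst hx
    exact fun h => hXY x hu (hNu h.1)
  rw [hset, Set.ncard_union_eq hdisjs (Set.toFinite _) (Set.toFinite _), Set.ncard_singleton]

lemma count_eq (G : SimpleGraph V) (X Y : Set V) (hunion : X ∪ Y = Set.univ)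
    (hdisj : Disjoint X Y)
    (hbip : ∀ u v : V, G.Adj u v → ((u ∈ X ∧ v ∈ Y) ∨ (u ∈ Y ∧ v ∈ X)))
    (cX cY : ℕ) (hcX : ∀ u ∈ X, (G.neighborSet u).ncard = cX)
    (hcY : ∀ v ∈ Y, (G.neighborSet v).ncard = cY) :
    cX * X.ncard = cY * Y.ncard := by
  classical
  have hD : ∀ u : V, (G.neighborSet u).ncard = ∑ v : V, (if G.Adj u v then 1 else 0) := by
    intro u
    rw [Set.ncard_eq_toFinset_card', ← Finset.card_filter]
    congr 1
    ext v
    simp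
  have hcount : ∀ (s : Set V) (c : ℕ), (∀ u ∈ s, (G.neighborSet u).ncard = c) →
      ∑ u : V, (if u ∈ s then (G.neighborSet u).ncard else 0) = c * s.ncard := by
    intro s c hs
    rw [← Finset.sum_filter,
      Finset.sum_congr rfl (fun u hu => hs u (Finset.mem_filter.mp hu).2),
      Finset.sum_const, smul_eq_mul, mul_comm]
    congr 1
    rw [Set.ncard_eq_toFinset_card']
    congr 1
    ext v
    simp
  have hpt : ∀ u v : V, (if u ∈ X ∧ G.Adj u v then 1 else 0)
      = (if v ∈ Y ∧ G.Adj v u then (1 : ℕ) else 0) := by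
    intro u v
    by_cases h : G.Adj u v
    · have h2 : u ∈ X ↔ v ∈ Y := by
        rcases hbip u v h with ⟨h1, h2⟩ | ⟨h1, h2⟩
        · exact ⟨fun _ => h2, fun _ => h1⟩
        · constructor
          · intro hu; exact absurd hu (fun hu' => Set.disjoint_left.mp hdisj hu' h1)
          · intro hv; exact absurd hv (fun hv' => Set.disjoint_left.mp hdisj h2 hv')
      by_cases hu : u ∈ X
      · simp [hu, h2.mp hu, h, h.symm]
      · have hv : v ∉ Y := fun hv => hu (h2.mpr hv)
        simp [hu, hv]
    · have h' : ¬ G.Adj v u := fun hh => h hh.symm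
      simp [h, h']
  have hXsum : ∑ u : V, (if u ∈ X then (G.neighborSet u).ncard else 0)
      = ∑ u : V, ∑ v : V, (if u ∈ X ∧ G.Adj u v then 1 else 0) := by
    refine Finset.sum_congr rfl fun u _ => ?_
    by_cases hu : u ∈ X
    · rw [if_pos hu, hD u]
      refine Finset.sum_congr rfl fun v _ => ?_
      simp [hu]
    · simp [hu]
  have hYsum : ∑ v : V, (if v ∈ Y then (G.neighborSet v).ncard else 0)
      = ∑ v : V, ∑ u : V, (if v ∈ Y ∧ G.Adj v u then 1 else 0) := by
    refine Finset.sum_congr rfl fun v _ => ?_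
    by_cases hv : v ∈ Y
    · rw [if_pos hv, hD v]
      refine Finset.sum_congr rfl fun u _ => ?_
      simp [hv]
    · simp [hv]
  calc cX * X.ncard = ∑ u : V, (if u ∈ X then (G.neighborSet u).ncard else 0) :=
        (hcount X cX hcX).symm
    _ = ∑ u : V, ∑ v : V, (if u ∈ X ∧ G.Adj u v then 1 else 0) := hXsum
    _ = ∑ u : V, ∑ v : V, (if v ∈ Y ∧ G.Adj v u then 1 else 0) := by
        refine Finset.sum_congr rfl fun u _ => Finset.sum_congr rfl fun v _ => hpt u v
    _ = ∑ v : V, ∑ u : V, (if v ∈ Y ∧ G.Adj v u then 1 else 0) := Finset.sum_comm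
    _ = ∑ v : V, (if v ∈ Y then (G.neighborSet v).ncard else 0) := hYsum.symm
    _ = cY * Y.ncard := hcount Y cY hcY


end Aux

-- extra small auxiliary lemma
lemma ncard_diff_add_inter {V : Type*} [Fintype V] (s t : Set V) :
    (s \ t).ncard + (s ∩ t).ncard = s.ncard := by
  rw [← Set.ncard_union_eq ?_ (Set.toFinite _) (Set.toFinite _), Set.diff_union_inter]
  rw [Set.disjoint_left]
  rintro x ⟨-, hx2⟩ hx3
  exact hx2 hx3.2

theorem statement_13 {V : Type*} [Fintype V] (G : SimpleGraph V) (hc : G.Connected)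
    (hdiam : G.diam = 3) (X Y : Set V)
    (hunion : X ∪ Y = Set.univ) (hdisj : Disjoint X Y)
    (hbip : ∀ u v : V, G.Adj u v → ((u ∈ X ∧ v ∈ Y) ∨ (u ∈ Y ∧ v ∈ X))) :
    IsHighlyDistBalanced G ↔
      ((∃ r : ℕ, ∀ v : V, (G.neighborSet v).ncard = r) ∨
       (X.ncard ≠ Y.ncard ∧
        (∀ u ∈ X, 2 * (G.neighborSet u).ncard = Y.ncard) ∧
        (∀ v ∈ Y, 2 * (G.neighborSet v).ncard = X.ncard))) := by
  classical
  have hNE : Nonempty V := hc.nonempty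
  have hnoTop : G.ediam ≠ ⊤ := ediam_ne_top_of_diam_ne_zero (by rw [hdiam]; norm_num)
  have hdle : ∀ a b : V, G.dist a b ≤ 3 := fun a b => hdiam ▸ dist_le_diam hnoTop
  obtain ⟨f, hf, hfX, hfY⟩ := bip_package G X Y hunion hdisj hbip
  have hfXY : ∀ w : V, w ∉ X → w ∈ Y := by
    intro w h
    have hw : w ∈ X ∪ Y := by rw [hunion]; exact Set.mem_univ w
    exact hw.resolve_left h
  have hunion' : Y ∪ X = Set.univ := by rw [Set.union_comm]; exact hunion
  have hdisj' : Disjoint Y X := hdisj.symm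
  have hbip' : ∀ u v : V, G.Adj u v → ((u ∈ Y ∧ v ∈ X) ∨ (u ∈ X ∧ v ∈ Y)) :=
    fun u v h => (hbip u v h).symm
  -- a pair at distance 3, normalized so the first vertex is in X
  obtain ⟨a, b, hab⟩ := exists_dist_eq_diam (G := G)
  rw [hdiam] at hab
  have hfab : f a ≠ f b := by
    have hp := dist_parity_s13 hc f hf a b
    rw [hab] at hp
    intro h
    rw [h] at hp
    have h3 : ((3 : ℕ) : ZMod 2) = 1 := by decide
    rw [h3] at hp
    exact one_ne_zero (left_eq_add.mp hp)
  obtain ⟨p, q, hpx, hqy, hpq⟩ : ∃ p q : V, p ∈ X ∧ q ∈ Y ∧ G.dist p q = 3 := by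
    by_cases ha : a ∈ X
    · refine ⟨a, b, ha, hfXY b fun hbX => hfab ?_, hab⟩
      rw [(hfX a).mp ha, (hfX b).mp hbX]
    · have haY : a ∈ Y := hfXY a ha
      have hbX : b ∈ X := by
        by_contra hbX
        exact hfab (by rw [(hfY a).mp haY, (hfY b).mp (hfXY b hbX)])
      refine ⟨b, a, hbX, haY, ?_⟩
      rw [SimpleGraph.dist_comm]
      exact hab
  -- an adjacent pair x0 ∈ X, y0 ∈ Y
  obtain ⟨x0, y0, hxy0, hx0, hy0⟩ : ∃ x0 y0 : V, G.Adj x0 y0 ∧ x0 ∈ X ∧ y0 ∈ Y := by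
    have h0 : G.dist p q ≠ 0 := by omega
    obtain ⟨w, hw⟩ := exists_walk_of_dist_ne_zero h0
    cases w with
    | nil =>
      rw [Walk.length_nil] at hw
      omega
    | cons h w' =>
      rcases hbip _ _ h with ⟨h1, h2⟩ | ⟨h1, h2⟩
      · exact ⟨_, _, h, h1, h2⟩
      · exact ⟨_, _, h.symm, h2, h1⟩
  constructor
  · -- forward direction
    intro hHDB
    have hdb2 := hHDB 2 (by norm_num) (by rw [hdiam]; norm_num)
    have hdb3 := hHDB 3 (by norm_num) (by rw [hdiam])
    -- degrees are constant on each part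
    have hconstX : ∀ u ∈ X, ∀ w ∈ X, (G.neighborSet u).ncard = (G.neighborSet w).ncard := by
      intro u hu w hw
      rcases eq_or_ne u w with rfl | hne
      · rfl
      · have hdist : G.dist u w = 2 :=
          dist_same hc hdle f hf (by rw [(hfX u).mp hu, (hfX w).mp hw]) hne
        have hbal := hdb2 u w hdist
        rw [IsBalancedPair,
          same_wset G hc hdle X Y hunion hdisj hbip hu hw hne,
          same_wset G hc hdle X Y hunion hdisj hbip hw hu hne.symm] at hbal
        have h1 := ncard_diff_add_inter (G.neighborSet u) (G.neighborSet w)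
        have h2 := ncard_diff_add_inter (G.neighborSet w) (G.neighborSet u)
        rw [Set.inter_comm] at h2
        omega
    have hconstY : ∀ u ∈ Y, ∀ w ∈ Y, (G.neighborSet u).ncard = (G.neighborSet w).ncard := by
      intro u hu w hw
      rcases eq_or_ne u w with rfl | hne
      · rfl
      · have hdist : G.dist u w = 2 :=
          dist_same hc hdle f hf (by rw [(hfY u).mp hu, (hfY w).mp hw]) hne
        have hbal := hdb2 u w hdist
        rw [IsBalancedPair,
          same_wset G hc hdle Y X hunion' hdisj' hbip' hu hw hne,
          same_wset G hc hdle Y X hunion' hdisj' hbip' hw hu hne.symm] at hbal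
        have h1 := ncard_diff_add_inter (G.neighborSet u) (G.neighborSet w)
        have h2 := ncard_diff_add_inter (G.neighborSet w) (G.neighborSet u)
        rw [Set.inter_comm] at h2
        omega
    -- the cross equation from the pair at distance 3
    have hbal3 := hdb3 p q hpq
    rw [IsBalancedPair] at hbal3
    have e1 := cross_wset G hc hdle X Y hunion hdisj hbip hpx hqy
    have e2 := cross_wset G hc hdle Y X hunion' hdisj' hbip' hqy hpx
    have hcrosseq : X.ncard + 2 * (G.neighborSet p).ncard
        = Y.ncard + 2 * (G.neighborSet q).ncard := by omega
    have hcXall : ∀ u ∈ X, (G.neighborSet u).ncard = (G.neighborSet p).ncard :=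
      fun u hu => hconstX u hu p hpx
    have hcYall : ∀ v ∈ Y, (G.neighborSet v).ncard = (G.neighborSet q).ncard :=
      fun v hv => hconstY v hv q hqy
    have hcnt := count_eq G X Y hunion hdisj hbip _ _ hcXall hcYall
    by_cases hxy : X.ncard = Y.ncard
    · left
      refine ⟨(G.neighborSet p).ncard, fun v => ?_⟩
      by_cases hv : v ∈ X
      · exact hcXall v hv
      · rw [hcYall v (hfXY v hv)]
        omega
    · right
      refine ⟨hxy, ?_, ?_⟩
      · have hz1 : ((G.neighborSet p).ncard : ℤ) * X.ncard
            = ((G.neighborSet q).ncard : ℤ) * Y.ncard := by exact_mod_cast hcnt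
        have hz2 : (X.ncard : ℤ) + 2 * (G.neighborSet p).ncard
            = (Y.ncard : ℤ) + 2 * (G.neighborSet q).ncard := by exact_mod_cast hcrosseq
        have h3 : ((X.ncard : ℤ) - 2 * (G.neighborSet q).ncard)
            * ((Y.ncard : ℤ) - (X.ncard : ℤ)) = 0 := by
          linear_combination (2 : ℤ) * hz1 - (X.ncard : ℤ) * hz2
        have hne' : ((Y.ncard : ℤ) - (X.ncard : ℤ)) ≠ 0 := by
          intro h
          apply hxy
          omega
        have h4 : (X.ncard : ℤ) = 2 * (G.neighborSet q).ncard :=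
          by have := (mul_eq_zero.mp h3).resolve_right hne'; omega
        have h5 : 2 * (G.neighborSet q).ncard = X.ncard := by omega
        have h6 : 2 * (G.neighborSet p).ncard = Y.ncard := by omega
        intro u hu
        rw [hcXall u hu]
        exact h6
      · have hz1 : ((G.neighborSet p).ncard : ℤ) * X.ncard
            = ((G.neighborSet q).ncard : ℤ) * Y.ncard := by exact_mod_cast hcnt
        have hz2 : (X.ncard : ℤ) + 2 * (G.neighborSet p).ncard
            = (Y.ncard : ℤ) + 2 * (G.neighborSet q).ncard := by exact_mod_cast hcrosseq
        have h3 : ((X.ncard : ℤ) - 2 * (G.neighborSet q).ncard)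
            * ((Y.ncard : ℤ) - (X.ncard : ℤ)) = 0 := by
          linear_combination (2 : ℤ) * hz1 - (X.ncard : ℤ) * hz2
        have hne' : ((Y.ncard : ℤ) - (X.ncard : ℤ)) ≠ 0 := by
          intro h
          apply hxy
          omega
        have h4 : (X.ncard : ℤ) = 2 * (G.neighborSet q).ncard :=
          by have := (mul_eq_zero.mp h3).resolve_right hne'; omega
        intro v hv
        rw [hcYall v hv]
        omega
  · -- reverse direction
    intro hyp
    obtain ⟨cX, cY, hcX, hcY, heq⟩ : ∃ cX cY : ℕ,
        (∀ u ∈ X, (G.neighborSet u).ncard = cX) ∧ (∀ v ∈ Y, (G.neighborSet v).ncard = cY) ∧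
        X.ncard + 2 * cX = Y.ncard + 2 * cY := by
      rcases hyp with ⟨r, hr⟩ | ⟨hne, hX2, hY2⟩
      · refine ⟨r, r, fun u _ => hr u, fun v _ => hr v, ?_⟩
        have hcnt := count_eq G X Y hunion hdisj hbip r r (fun u _ => hr u) (fun v _ => hr v)
        have hrpos : 1 ≤ r := by
          have : y0 ∈ G.neighborSet x0 := hxy0
          have hpos : 0 < (G.neighborSet x0).ncard :=
            (Set.ncard_pos (Set.toFinite _)).mpr ⟨y0, this⟩
          rw [hr x0] at hpos
          omega
        have := Nat.eq_of_mul_eq_mul_left (by omega : 0 < r) hcnt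
        omega
      · refine ⟨(G.neighborSet x0).ncard, (G.neighborSet y0).ncard, ?_, ?_, ?_⟩
        · intro u hu
          have h1 := hX2 u hu
          have h2 := hX2 x0 hx0
          omega
        · intro v hv
          have h1 := hY2 v hv
          have h2 := hY2 y0 hy0
          omega
        · have h1 := hX2 x0 hx0
          have h2 := hY2 y0 hy0
          omega
    -- balancedness for a cross pair
    have hcross_bal : ∀ u v : V, u ∈ X → v ∈ Y → IsBalancedPair G u v := by
      intro u v hu hv
      have e1 := cross_wset G hc hdle X Y hunion hdisj hbip hu hv
      have e2 := cross_wset G hc hdle Y X hunion' hdisj' hbip' hv hu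
      rw [hcX u hu, hcY v hv] at e1 e2
      rw [IsBalancedPair]
      omega
    -- balancedness for a same-part pair
    have hsame_bal : ∀ (A B : Set V), A ∪ B = Set.univ → Disjoint A B →
        (∀ u v : V, G.Adj u v → ((u ∈ A ∧ v ∈ B) ∨ (u ∈ B ∧ v ∈ A))) →
        ∀ u v : V, u ∈ A → v ∈ A → u ≠ v →
        (G.neighborSet u).ncard = (G.neighborSet v).ncard → IsBalancedPair G u v := by
      intro A B hAB hdAB hbAB u v hu hv hne hdeg
      rw [IsBalancedPair,
        same_wset G hc hdle A B hAB hdAB hbAB hu hv hne,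
        same_wset G hc hdle A B hAB hdAB hbAB hv hu hne.symm]
      have h1 := ncard_diff_add_inter (G.neighborSet u) (G.neighborSet v)
      have h2 := ncard_diff_add_inter (G.neighborSet v) (G.neighborSet u)
      rw [Set.inter_comm] at h2
      omega
    intro l hl1 hl2 u v hd
    rw [hdiam] at hl2
    have hltri : l = 1 ∨ l = 2 ∨ l = 3 := by omega
    rcases hltri with rfl | rfl | rfl
    · have hadj : G.Adj u v := dist_eq_one_iff_adj.mp hd
      rcases hbip u v hadj with ⟨h1, h2⟩ | ⟨h1, h2⟩
      · exact hcross_bal u v h1 h2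
      · exact (hcross_bal v u h2 h1).symm
    · have hne : u ≠ v := by
        intro h
        rw [h, SimpleGraph.dist_self] at hd
        omega
      have hsame : f u = f v := by
        have hp := dist_parity_s13 hc f hf u v
        rw [hd] at hp
        have h2 : ((2 : ℕ) : ZMod 2) = 0 := by decide
        rw [h2, add_zero] at hp
        exact hp.symm
      by_cases hu : u ∈ X
      · have hv : v ∈ X := by
          by_contra hv
          have := (hfY v).mp (hfXY v hv)
          rw [(hfX u).mp hu, this] at hsame
          exact zero_ne_one hsame
        exact hsame_bal X Y hunion hdisj hbip u v hu hv hne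
          (by rw [hcX u hu, hcX v hv])
      · have huY : u ∈ Y := hfXY u hu
        have hv : v ∈ Y := by
          by_contra hv
          have := (hfX v).mp (by by_contra hvx; exact hv (hfXY v hvx) |>.elim)
          rw [(hfY u).mp huY, this] at hsame
          exact one_ne_zero hsame
        exact hsame_bal Y X hunion' hdisj' hbip' u v huY hv hne
          (by rw [hcY u huY, hcY v hv])
    · have hcross : f u ≠ f v := by
        have hp := dist_parity_s13 hc f hf u v
        rw [hd] at hp
        intro h
        rw [h] at hp
        have h3 : ((3 : ℕ) : ZMod 2) = 1 := by decide
        rw [h3] at hp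
        exact one_ne_zero (left_eq_add.mp hp)
      by_cases hu : u ∈ X
      · have hv : v ∈ Y := by
          apply hfXY
          intro hvX
          exact hcross (by rw [(hfX u).mp hu, (hfX v).mp hvX])
        exact hcross_bal u v hu hv
      · have huY : u ∈ Y := hfXY u hu
        have hv : v ∈ X := by
          by_contra hvX
          exact hcross (by rw [(hfY u).mp huY, (hfY v).mp (hfXY v hvX)])
        exact (hcross_bal v u hv huY).symm
end

section
/- Let Γ be a connected bipartite finite simple graph of diameter 3. Then: (a) if Γ is 1-distance-balanced then Γ is also 2-distance-balanced and 3-distance-balanced; and (b) if Γ is both 2-distance-balanced and 3-distance-balanced then Γ is 1-distance-balanced. Consequently, exactly one of the following holds: Γ is highly distance-balanced; Γ is 2-distance-balanced but neither 1- nor 3-distance-balanced; Γ is 3-distance-balanced but neither 1- nor 2-distance-balanced; Γ is not ℓ-distance-balanced for any 1 ≤ ℓ ≤ 3. -/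
open SimpleGraph

namespace DB14

variable {V : Type*} [Fintype V] {G : SimpleGraph V}

lemma nat_zmod2_zero {n : ℕ} (h : (n : ZMod 2) = 0) : n % 2 = 0 := by
  have h2 : ((n % 2 : ℕ) : ZMod 2) = 0 := by rw [ZMod.natCast_mod]; exact h
  rcases Nat.mod_two_eq_zero_or_one n with h' | h'
  · exact h'
  · rw [h'] at h2; simp at h2

lemma nat_zmod2_one {n : ℕ} (h : (n : ZMod 2) = 1) : n % 2 = 1 := by
  have h2 : ((n % 2 : ℕ) : ZMod 2) = 1 := by rw [ZMod.natCast_mod]; exact h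
  rcases Nat.mod_two_eq_zero_or_one n with h' | h'
  · rw [h'] at h2; simp at h2
  · exact h'

lemma ncard_diff_inter (s t : Set V) : (s \ t).ncard + (s ∩ t).ncard = s.ncard := by
  have hdisj : Disjoint (s \ t) (s ∩ t) :=
    Set.disjoint_left.mpr (fun x hx h2 => hx.2 h2.2)
  conv_rhs => rw [← Set.diff_union_inter s t]
  rw [Set.ncard_union_eq hdisj]

section withColoring

variable (c : V → ZMod 2)

lemma walk_parity (hcol : ∀ ⦃x y⦄, G.Adj x y → c x ≠ c y) {u v : V} (p : G.Walk u v) : (p.length : ZMod 2) = c u + c v := by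
  induction p with
  | nil =>
    have : ∀ a : ZMod 2, (0 : ZMod 2) = a + a := by decide
    simpa using this _
  | cons h q ih =>
    rename_i x a y
    have hne : c x ≠ c a := hcol h
    have key : ∀ p q r : ZMod 2, p ≠ q → q + r + 1 = p + r := by decide
    simp only [SimpleGraph.Walk.length_cons, Nat.cast_add, Nat.cast_one, ih]
    exact key _ _ _ hne

lemma dist_parity (hcol : ∀ ⦃x y⦄, G.Adj x y → c x ≠ c y) (hc : G.Connected) (u v : V) :
    ((G.dist u v : ℕ) : ZMod 2) = c u + c v := by
  obtain ⟨p, hp⟩ := hc.exists_walk_length_eq_dist u v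
  rw [← hp]; exact walk_parity c hcol p

end withColoring

end DB14

namespace DB14

set_option linter.unusedSectionVars false

variable {V : Type*} [Fintype V] {G : SimpleGraph V}

section main

variable (c : V → ZMod 2)

lemma wSet_odd_eq (hcol : ∀ ⦃x y⦄, G.Adj x y → c x ≠ c y) (hc : G.Connected)
    (hd3 : ∀ x y : V, G.dist x y ≤ 3) {u v : V} (hd : G.dist u v % 2 = 1) :
    wSet G u v =
      ({w | c w = c u} \ (G.neighborSet v \ {u})) ∪ (G.neighborSet u \ {v}) := by
  have hpuv := dist_parity c hcol hc u v
  have hne_uv : c u ≠ c v := by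
    intro hE
    rw [hE] at hpuv
    have hself : ∀ a : ZMod 2, a + a = 0 := by decide
    have h0 : ((G.dist u v : ℕ) : ZMod 2) = 0 := by rw [hpuv]; exact hself _
    have := nat_zmod2_zero h0
    omega
  have hcv : c v = c u + 1 := by
    have : ∀ a b : ZMod 2, a ≠ b → b = a + 1 := by decide
    exact this _ _ hne_uv
  ext w
  have hpuw := dist_parity c hcol hc u w
  have hpvw := dist_parity c hcol hc v w
  simp only [wSet, Set.mem_setOf_eq, Set.mem_union, Set.mem_diff,
    SimpleGraph.mem_neighborSet, Set.mem_singleton_iff]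
  constructor
  · intro h
    by_cases hcw : c w = c u
    · left
      refine ⟨hcw, ?_⟩
      rintro ⟨hadj, hne⟩
      have h1 : G.dist v w = 1 := dist_eq_one_iff_adj.mpr hadj
      have h0 : G.dist u w = 0 := by omega
      exact hne ((hc.dist_eq_zero_iff).mp h0).symm
    · right
      have hcw' : c w = c u + 1 := by
        have : ∀ a b : ZMod 2, a ≠ b → a = b + 1 := by decide
        exact this _ _ hcw
      have heuw : G.dist u w % 2 = 1 := by
        apply nat_zmod2_one
        rw [hpuw, hcw']
        have : ∀ a : ZMod 2, a + (a + 1) = 1 := by decide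
        exact this _
      have hevw : G.dist v w % 2 = 0 := by
        apply nat_zmod2_zero
        rw [hpvw, hcv, hcw']
        have : ∀ a : ZMod 2, (a + 1) + (a + 1) = 0 := by decide
        exact this _
      have h4 := hd3 v w
      have hduw1 : G.dist u w = 1 := by omega
      refine ⟨dist_eq_one_iff_adj.mp hduw1, ?_⟩
      intro hwv
      subst hwv
      simp [SimpleGraph.dist_self] at h
  · rintro (⟨hcw, hnot⟩ | ⟨hadj, hne⟩)
    · push_neg at hnot
      by_cases hwu : w = u
      · subst hwu
        simp only [SimpleGraph.dist_self]
        exact hc.pos_dist_of_ne (fun h => hne_uv (by rw [h]))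
      · have hnadj : ¬ G.Adj v w := fun ha => hwu (hnot ha)
        have heuw : G.dist u w % 2 = 0 := by
          apply nat_zmod2_zero
          rw [hpuw, hcw]
          have : ∀ a : ZMod 2, a + a = 0 := by decide
          exact this _
        have hovw : G.dist v w % 2 = 1 := by
          apply nat_zmod2_one
          rw [hpvw, hcv, hcw]
          have : ∀ a : ZMod 2, (a + 1) + a = 1 := by decide
          exact this _
        have hn1 : G.dist v w ≠ 1 := fun h => hnadj (dist_eq_one_iff_adj.mp h)
        have := hd3 u w
        have := hd3 v w
        omega
    · have hduw : G.dist u w = 1 := dist_eq_one_iff_adj.mpr hadj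
      have hcw : c w = c u + 1 := by
        have h' := hcol hadj
        have : ∀ a b : ZMod 2, a ≠ b → b = a + 1 := by decide
        exact this _ _ h'
      have hevw : G.dist v w % 2 = 0 := by
        apply nat_zmod2_zero
        rw [hpvw, hcv, hcw]
        have : ∀ a : ZMod 2, (a + 1) + (a + 1) = 0 := by decide
        exact this _
      have hn0 : G.dist v w ≠ 0 := by
        intro h0
        exact hne ((hc.dist_eq_zero_iff).mp h0).symm
      omega

end main

end DB14

namespace DB14

set_option linter.unusedSectionVars false

variable {V : Type*} [Fintype V] {G : SimpleGraph V}

section cards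

variable (c : V → ZMod 2)

lemma ncard_inter_single_comm {u v : V} :
    (G.neighborSet v ∩ {u}).ncard = (G.neighborSet u ∩ {v}).ncard := by
  by_cases hadj : G.Adj u v
  · have h1 : G.neighborSet v ∩ {u} = {u} := by
      apply Set.inter_eq_self_of_subset_right
      intro x hx
      rw [Set.mem_singleton_iff] at hx
      subst hx
      exact hadj.symm
    have h2 : G.neighborSet u ∩ {v} = {v} := by
      apply Set.inter_eq_self_of_subset_right
      intro x hx
      rw [Set.mem_singleton_iff] at hx
      subst hx
      exact hadj
    rw [h1, h2, Set.ncard_singleton, Set.ncard_singleton]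
  · have h1 : G.neighborSet v ∩ {u} = ∅ := by
      ext x
      simp only [Set.mem_inter_iff, SimpleGraph.mem_neighborSet, Set.mem_singleton_iff,
        Set.mem_empty_iff_false, iff_false, not_and]
      rintro ha rfl
      exact hadj ha.symm
    have h2 : G.neighborSet u ∩ {v} = ∅ := by
      ext x
      simp only [Set.mem_inter_iff, SimpleGraph.mem_neighborSet, Set.mem_singleton_iff,
        Set.mem_empty_iff_false, iff_false, not_and]
      rintro ha rfl
      exact hadj ha
    rw [h1, h2]

lemma ncard_wSet_odd (hcol : ∀ ⦃x y⦄, G.Adj x y → c x ≠ c y) (hc : G.Connected)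
    (hd3 : ∀ x y : V, G.dist x y ≤ 3) {u v : V} (hd : G.dist u v % 2 = 1) :
    (wSet G u v).ncard + (G.neighborSet v).ncard
      = {w | c w = c u}.ncard + (G.neighborSet u).ncard := by
  rw [wSet_odd_eq c hcol hc hd3 hd]
  have hne_uv : c u ≠ c v := by
    intro hE
    have hpuv := dist_parity c hcol hc u v
    rw [hE] at hpuv
    have hself : ∀ a : ZMod 2, a + a = 0 := by decide
    have h0 : ((G.dist u v : ℕ) : ZMod 2) = 0 := by rw [hpuv]; exact hself _
    have := nat_zmod2_zero h0
    omega
  have hsub : G.neighborSet v \ {u} ⊆ {w | c w = c u} := by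
    rintro x ⟨hx, -⟩
    have h1 : c v ≠ c x := hcol hx
    have : ∀ a b d : ZMod 2, a ≠ b → b ≠ d → d = a := by decide
    exact this _ _ _ hne_uv h1
  have hdisj : Disjoint ({w | c w = c u} \ (G.neighborSet v \ {u}))
      (G.neighborSet u \ {v}) := by
    rw [Set.disjoint_left]
    rintro x ⟨hx1, -⟩ ⟨hx2, -⟩
    exact (hcol hx2) hx1.symm
  rw [Set.ncard_union_eq hdisj]
  have h1 := Set.ncard_diff_add_ncard_of_subset hsub
  have h2 := ncard_diff_inter (G.neighborSet v) ({u} : Set V)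
  have h3 := ncard_diff_inter (G.neighborSet u) ({v} : Set V)
  have h4 := ncard_inter_single_comm (G := G) (u := u) (v := v)
  omega

end cards

end DB14

namespace DB14

set_option linter.unusedSectionVars false

variable {V : Type*} [Fintype V] {G : SimpleGraph V}

section more

variable (c : V → ZMod 2)

lemma balanced_odd_iff (hcol : ∀ ⦃x y⦄, G.Adj x y → c x ≠ c y) (hc : G.Connected)
    (hd3 : ∀ x y : V, G.dist x y ≤ 3) {u v : V} (hd : G.dist u v % 2 = 1) :
    IsBalancedPair G u v ↔
      {w | c w = c u}.ncard + 2 * (G.neighborSet u).ncard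
        = {w | c w = c v}.ncard + 2 * (G.neighborSet v).ncard := by
  have hd' : G.dist v u % 2 = 1 := by rw [SimpleGraph.dist_comm]; exact hd
  have e1 := ncard_wSet_odd c hcol hc hd3 hd
  have e2 := ncard_wSet_odd c hcol hc hd3 hd'
  unfold IsBalancedPair
  omega

lemma wSet_two_eq (hcol : ∀ ⦃x y⦄, G.Adj x y → c x ≠ c y) (hc : G.Connected)
    (hd3 : ∀ x y : V, G.dist x y ≤ 3) {u v : V} (hd : G.dist u v = 2) :
    wSet G u v = {u} ∪ (G.neighborSet u \ G.neighborSet v) := by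
  have hpuv := dist_parity c hcol hc u v
  have hcv : c v = c u := by
    rw [hd] at hpuv
    have h2 : ((2 : ℕ) : ZMod 2) = 0 := by decide
    rw [h2] at hpuv
    have : ∀ a b : ZMod 2, 0 = a + b → b = a := by decide
    exact this _ _ hpuv
  have hne : u ≠ v := by
    intro h
    rw [h, SimpleGraph.dist_self] at hd
    omega
  ext w
  have hpuw := dist_parity c hcol hc u w
  have hpvw := dist_parity c hcol hc v w
  simp only [wSet, Set.mem_setOf_eq, Set.mem_union, Set.mem_diff,
    SimpleGraph.mem_neighborSet, Set.mem_singleton_iff]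
  constructor
  · intro h
    by_cases hcw : c w = c u
    · left
      have heuw : G.dist u w % 2 = 0 := by
        apply nat_zmod2_zero
        rw [hpuw, hcw]
        have : ∀ a : ZMod 2, a + a = 0 := by decide
        exact this _
      have hevw : G.dist v w % 2 = 0 := by
        apply nat_zmod2_zero
        rw [hpvw, hcv, hcw]
        have : ∀ a : ZMod 2, a + a = 0 := by decide
        exact this _
      have h4 := hd3 v w
      have h0 : G.dist u w = 0 := by omega
      exact ((hc.dist_eq_zero_iff).mp h0).symm
    · right
      have hcw' : c w = c u + 1 := by
        have : ∀ a b : ZMod 2, a ≠ b → a = b + 1 := by decide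
        exact this _ _ hcw
      have houw : G.dist u w % 2 = 1 := by
        apply nat_zmod2_one
        rw [hpuw, hcw']
        have : ∀ a : ZMod 2, a + (a + 1) = 1 := by decide
        exact this _
      have hovw : G.dist v w % 2 = 1 := by
        apply nat_zmod2_one
        rw [hpvw, hcv, hcw']
        have : ∀ a : ZMod 2, a + (a + 1) = 1 := by decide
        exact this _
      have h4 := hd3 v w
      have hduw : G.dist u w = 1 := by omega
      have hdvw : G.dist v w = 3 := by omega
      refine ⟨dist_eq_one_iff_adj.mp hduw, fun hadj => ?_⟩
      rw [dist_eq_one_iff_adj.mpr hadj] at hdvw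
      omega
  · rintro (rfl | ⟨hadj, hnadj⟩)
    · rw [SimpleGraph.dist_self, SimpleGraph.dist_comm, hd]
      omega
    · have hduw : G.dist u w = 1 := dist_eq_one_iff_adj.mpr hadj
      have hcw : c w = c u + 1 := by
        have h' := hcol hadj
        have : ∀ a b : ZMod 2, a ≠ b → b = a + 1 := by decide
        exact this _ _ h'
      have hovw : G.dist v w % 2 = 1 := by
        apply nat_zmod2_one
        rw [hpvw, hcv, hcw]
        have : ∀ a : ZMod 2, a + (a + 1) = 1 := by decide
        exact this _
      have hn1 : G.dist v w ≠ 1 := fun h => hnadj (dist_eq_one_iff_adj.mp h)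
      omega

lemma balanced_two_iff (hcol : ∀ ⦃x y⦄, G.Adj x y → c x ≠ c y) (hc : G.Connected)
    (hd3 : ∀ x y : V, G.dist x y ≤ 3) {u v : V} (hd : G.dist u v = 2) :
    IsBalancedPair G u v ↔ (G.neighborSet u).ncard = (G.neighborSet v).ncard := by
  have hd' : G.dist v u = 2 := by rw [SimpleGraph.dist_comm]; exact hd
  have key : ∀ x y : V, G.dist x y = 2 →
      (wSet G x y).ncard + (G.neighborSet x ∩ G.neighborSet y).ncard
        = 1 + (G.neighborSet x).ncard := by
    intro x y hxy
    rw [wSet_two_eq c hcol hc hd3 hxy]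
    have hdisj : Disjoint ({x} : Set V) (G.neighborSet x \ G.neighborSet y) := by
      rw [Set.disjoint_left]
      rintro z rfl ⟨hz, -⟩
      exact G.irrefl hz
    rw [Set.ncard_union_eq hdisj, Set.ncard_singleton]
    have := ncard_diff_inter (G.neighborSet x) (G.neighborSet y)
    omega
  have e1 := key u v hd
  have e2 := key v u hd'
  rw [Set.inter_comm] at e2
  unfold IsBalancedPair
  omega

end more

end DB14

namespace DB14

set_option linter.unusedSectionVars false

variable {V : Type*} [Fintype V] {G : SimpleGraph V}

lemma deg_const (c : V → ZMod 2) (hcol : ∀ ⦃x y⦄, G.Adj x y → c x ≠ c y)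
    (hc : G.Connected)
    (h2 : ∀ x y : V, G.dist x y = 2 →
      (G.neighborSet x).ncard = (G.neighborSet y).ncard) :
    ∀ x y : V, c x = c y → (G.neighborSet x).ncard = (G.neighborSet y).ncard := by
  suffices H : ∀ n : ℕ, ∀ x y : V, ∀ p : G.Walk x y, p.length = n → c x = c y →
      (G.neighborSet x).ncard = (G.neighborSet y).ncard by
    intro x y hxy
    obtain ⟨p⟩ := hc.preconnected x y
    exact H p.length x y p rfl hxy
  intro n
  induction n using Nat.strong_induction_on with
  | _ n ih =>
    intro x y p hp hxy
    cases p with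
    | nil => rfl
    | @cons _ a _ h q =>
      cases q with
      | nil => exact absurd hxy (hcol h)
      | @cons _ b _ h2' r =>
        have hcb : c x = c b := by
          have hxa := hcol h
          have hab := hcol h2'
          have : ∀ p q r : ZMod 2, p ≠ q → q ≠ r → p = r := by decide
          exact this _ _ _ hxa hab
        have hxb : (G.neighborSet x).ncard = (G.neighborSet b).ncard := by
          by_cases hxb' : x = b
          · rw [hxb']
          · apply h2
            have hle : G.dist x b ≤ 2 := by
              have := SimpleGraph.dist_le (SimpleGraph.Walk.cons h h2'.toWalk)
              simpa using this
            have hne0 : G.dist x b ≠ 0 := fun h0 => hxb' ((hc.dist_eq_zero_iff).mp h0)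
            have heven : G.dist x b % 2 = 0 := by
              apply nat_zmod2_zero
              rw [dist_parity c hcol hc x b, hcb]
              have : ∀ a : ZMod 2, a + a = 0 := by decide
              exact this _
            omega
        rw [hxb]
        have hlen : r.length < n := by
          simp only [SimpleGraph.Walk.length_cons] at hp
          omega
        exact ih r.length hlen b y r rfl (hcb ▸ hxy)

end DB14

namespace DB14

set_option linter.unusedSectionVars false

variable {V : Type*} [Fintype V] {G : SimpleGraph V}

lemma odd_ne (c : V → ZMod 2) (hcol : ∀ ⦃x y⦄, G.Adj x y → c x ≠ c y)
    (hc : G.Connected) {u v : V} (hd : G.dist u v % 2 = 1) : c u ≠ c v := by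
  intro hE
  have hpuv := dist_parity c hcol hc u v
  rw [hE] at hpuv
  have hself : ∀ a : ZMod 2, a + a = 0 := by decide
  have h0 : ((G.dist u v : ℕ) : ZMod 2) = 0 := by rw [hpuv]; exact hself _
  have := nat_zmod2_zero h0
  omega

end DB14


theorem statement_14 {V : Type*} [Fintype V] (G : SimpleGraph V) (hc : G.Connected)
    (hdiam : G.diam = 3) (hbip : G.Colorable 2) :
    (IsDistBalanced G 1 → IsDistBalanced G 2 ∧ IsDistBalanced G 3) ∧
    (IsDistBalanced G 2 ∧ IsDistBalanced G 3 → IsDistBalanced G 1) ∧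
    (IsHighlyDistBalanced G ∨
     (IsDistBalanced G 2 ∧ ¬ IsDistBalanced G 1 ∧ ¬ IsDistBalanced G 3) ∨
     (IsDistBalanced G 3 ∧ ¬ IsDistBalanced G 1 ∧ ¬ IsDistBalanced G 2) ∨
     (¬ IsDistBalanced G 1 ∧ ¬ IsDistBalanced G 2 ∧ ¬ IsDistBalanced G 3)) := by
  classical
  have hneV : Nonempty V := hc.nonempty
  obtain ⟨C⟩ := hbip
  set c : V → ZMod 2 := fun v => if C v = 0 then 0 else 1 with hcdef
  have hcol : ∀ ⦃x y⦄, G.Adj x y → c x ≠ c y := by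
    intro x y hxy
    have hv := C.valid hxy
    have hfin : ∀ a : Fin 2, a = 0 ∨ a = 1 := by decide
    simp only [hcdef]
    rcases hfin (C x) with h0 | h0 <;> rcases hfin (C y) with h1 | h1 <;>
      rw [h0, h1] at hv ⊢ <;> first | (exact absurd rfl hv) | decide
  have hd3 : ∀ x y : V, G.dist x y ≤ 3 := by
    intro x y
    have h := G.dist_le_diam (u := x) (v := y)
      (G.ediam_ne_top_of_diam_ne_zero (by rw [hdiam]; norm_num))
    rwa [hdiam] at h
  -- edge consequence of 1-distance-balancedness
  have hedge : IsDistBalanced G 1 → ∀ x y : V, G.Adj x y →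
      {w | c w = c x}.ncard + 2 * (G.neighborSet x).ncard
        = {w | c w = c y}.ncard + 2 * (G.neighborSet y).ncard := by
    intro hP1 x y hxy
    have hd1 : G.dist x y = 1 := dist_eq_one_iff_adj.mpr hxy
    exact (DB14.balanced_odd_iff c hcol hc hd3 (by rw [hd1])).mp (hP1 x y hd1)
  -- part (a)
  have parta : IsDistBalanced G 1 → IsDistBalanced G 2 ∧ IsDistBalanced G 3 := by
    intro hP1
    constructor
    · intro u v huv
      rw [DB14.balanced_two_iff c hcol hc hd3 huv]
      obtain ⟨p, hp⟩ := hc.exists_walk_length_eq_dist u v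
      rw [huv] at hp
      cases p with
      | nil => simp at hp
      | @cons _ a _ h q =>
        cases q with
        | nil => simp at hp
        | @cons _ b _ h2' r =>
          simp only [SimpleGraph.Walk.length_cons] at hp
          have hb : b = v := SimpleGraph.Walk.eq_of_length_eq_zero (p := r) (by omega)
          subst hb
          have e1 := hedge hP1 u a h
          have e2 := hedge hP1 a b h2'
          have hcuv : c u = c b := by
            have h1 := hcol h
            have h2 := hcol h2'
            have : ∀ p q r : ZMod 2, p ≠ q → q ≠ r → p = r := by decide
            exact this _ _ _ h1 h2
          have hS : {w | c w = c u}.ncard = {w | c w = c b}.ncard := by rw [hcuv]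
          omega
    · intro u v huv
      rw [DB14.balanced_odd_iff c hcol hc hd3 (by rw [huv])]
      obtain ⟨p, hp⟩ := hc.exists_walk_length_eq_dist u v
      rw [huv] at hp
      cases p with
      | nil => simp at hp
      | @cons _ a _ h q =>
        cases q with
        | nil => simp at hp
        | @cons _ b _ h2' r =>
          cases r with
          | nil => simp at hp
          | @cons _ d _ h3' r' =>
            simp only [SimpleGraph.Walk.length_cons] at hp
            have hd' : d = v := SimpleGraph.Walk.eq_of_length_eq_zero (p := r') (by omega)
            subst hd'
            have e1 := hedge hP1 u a h
            have e2 := hedge hP1 a b h2'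
            have e3 := hedge hP1 b d h3'
            omega
  -- part (b)
  have partb : IsDistBalanced G 2 ∧ IsDistBalanced G 3 → IsDistBalanced G 1 := by
    rintro ⟨hP2, hP3⟩ u v huv
    have hadj : G.Adj u v := dist_eq_one_iff_adj.mp huv
    rw [DB14.balanced_odd_iff c hcol hc hd3 (by rw [huv])]
    have h2' : ∀ x y : V, G.dist x y = 2 →
        (G.neighborSet x).ncard = (G.neighborSet y).ncard := by
      intro x y hxy
      exact (DB14.balanced_two_iff c hcol hc hd3 hxy).mp (hP2 x y hxy)
    have hdc := DB14.deg_const c hcol hc h2'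
    obtain ⟨x, y, hxy⟩ := G.exists_dist_eq_diam
    rw [hdiam] at hxy
    have hPhixy := (DB14.balanced_odd_iff c hcol hc hd3 (by rw [hxy])).mp (hP3 x y hxy)
    have hcxy : c x ≠ c y := DB14.odd_ne c hcol hc (by rw [hxy])
    have hcuv : c u ≠ c v := hcol hadj
    by_cases hux : c u = c x
    · have hcvy : c v = c y := by
        have hvnx : c v ≠ c x := by rw [← hux]; exact hcuv.symm
        have : ∀ a b d : ZMod 2, a ≠ b → d ≠ b → a = d := by decide
        exact this _ _ _ hvnx hcxy.symm
      have h1 : {w | c w = c u}.ncard = {w | c w = c x}.ncard := by rw [hux]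
      have h2 : {w | c w = c v}.ncard = {w | c w = c y}.ncard := by rw [hcvy]
      have h3 := hdc u x hux
      have h4 := hdc v y hcvy
      omega
    · have huy : c u = c y := by
        have : ∀ a b d : ZMod 2, ¬a = b → d ≠ b → a = d := by decide
        exact this _ _ _ hux hcxy.symm
      have hcvx : c v = c x := by
        have hvny : c v ≠ c y := by rw [← huy]; exact hcuv.symm
        have : ∀ a b d : ZMod 2, a ≠ b → d ≠ b → a = d := by decide
        exact this _ _ _ hvny hcxy
      have h1 : {w | c w = c u}.ncard = {w | c w = c y}.ncard := by rw [huy]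
      have h2 : {w | c w = c v}.ncard = {w | c w = c x}.ncard := by rw [hcvx]
      have h3 := hdc u y huy
      have h4 := hdc v x hcvx
      omega
  refine ⟨parta, partb, ?_⟩
  have hh : (IsDistBalanced G 1 ∧ IsDistBalanced G 2 ∧ IsDistBalanced G 3) →
      IsHighlyDistBalanced G := by
    rintro ⟨p1, p2, p3⟩ ℓ h1 h3
    rw [hdiam] at h3
    interval_cases ℓ <;> assumption
  by_cases hP1 : IsDistBalanced G 1
  · exact Or.inl (hh ⟨hP1, parta hP1⟩)
  · have hn23 : ¬(IsDistBalanced G 2 ∧ IsDistBalanced G 3) := fun h => hP1 (partb h)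
    by_cases hP2 : IsDistBalanced G 2
    · exact Or.inr (Or.inl ⟨hP2, hP1, fun h3 => hn23 ⟨hP2, h3⟩⟩)
    · by_cases hP3 : IsDistBalanced G 3
      · exact Or.inr (Or.inr (Or.inl ⟨hP3, hP1, hP2⟩))
      · exact Or.inr (Or.inr (Or.inr ⟨hP1, hP2, hP3⟩))
end

section
/- Let n ≥ 5 be an integer. Then the generalized Petersen graph GP(n,2) is 1-distance-balanced if and only if n ∈ {5, 7, 10}. -/
set_option maxHeartbeats 2000000


open SimpleGraph

section Generic
variable {V : Type*} (G : SimpleGraph V) (s : V) (f : V → ℕ)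

lemma walk_lower (hlip : ∀ x y, G.Adj x y → f y ≤ f x + 1) :
    ∀ {u v : V} (p : G.Walk u v), f v ≤ f u + p.length := by
  intro u v p
  induction p with
  | nil => simp
  | cons h q ih =>
    have := hlip _ _ h
    simp only [Walk.length_cons]
    omega

lemma exists_walk_of_descent
    (hz : ∀ x, f x = 0 → x = s)
    (hdesc : ∀ x, f x ≠ 0 → ∃ y, G.Adj y x ∧ f y < f x) :
    ∀ x, ∃ p : G.Walk s x, p.length ≤ f x := by
  have key : ∀ k x, f x ≤ k → ∃ p : G.Walk s x, p.length ≤ f x := by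
    intro k
    induction k with
    | zero =>
      intro x hx
      have : x = s := hz x (by omega)
      subst this
      exact ⟨Walk.nil, by simp⟩
    | succ k ih =>
      intro x hx
      by_cases h0 : f x = 0
      · have : x = s := hz x h0
        subst this
        exact ⟨Walk.nil, by simp⟩
      · obtain ⟨y, hadj, hlt⟩ := hdesc x h0
        obtain ⟨p, hp⟩ := ih y (by omega)
        exact ⟨p.concat hadj, by rw [Walk.length_concat]; omega⟩
  exact fun x => key (f x) x le_rfl

lemma dist_eq_of_descent
    (h0 : f s = 0)
    (hz : ∀ x, f x = 0 → x = s)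
    (hlip : ∀ x y, G.Adj x y → f y ≤ f x + 1)
    (hdesc : ∀ x, f x ≠ 0 → ∃ y, G.Adj y x ∧ f y < f x) :
    ∀ x, G.dist s x = f x := by
  intro x
  obtain ⟨p, hp⟩ := exists_walk_of_descent G s f hz hdesc x
  have hub : G.dist s x ≤ f x := le_trans (SimpleGraph.dist_le p) hp
  have hreach : G.Reachable s x := ⟨p⟩
  obtain ⟨q, hq⟩ := hreach.exists_walk_length_eq_dist
  have := walk_lower G f hlip q
  omega

end Generic

def GPrel (n k : ℕ) : (ZMod n ⊕ ZMod n) → (ZMod n ⊕ ZMod n) → Prop := fun x y =>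
    match x, y with
    | Sum.inl i, Sum.inl j => j = i + 1
    | Sum.inr i, Sum.inr j => j = i + (k : ZMod n)
    | Sum.inl i, Sum.inr j => i = j
    | Sum.inr _, Sum.inl _ => False

instance GPrelDec (n k : ℕ) : ∀ x y, Decidable (GPrel n k x y)
  | .inl i, .inl j => inferInstanceAs (Decidable (j = i + 1))
  | .inr i, .inr j => inferInstanceAs (Decidable (j = i + (k : ZMod n)))
  | .inl i, .inr j => inferInstanceAs (Decidable (i = j))
  | .inr _, .inl _ => inferInstanceAs (Decidable False)

lemma GP_eq_fromRel (n k : ℕ) : GP n k = SimpleGraph.fromRel (GPrel n k) := rfl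

instance GPAdjDec (n k : ℕ) : DecidableRel (GP n k).Adj := fun x y =>
  decidable_of_iff (x ≠ y ∧ (GPrel n k x y ∨ GPrel n k y x))
    (by rw [GP_eq_fromRel]; exact (SimpleGraph.fromRel_adj _ x y).symm)

/-- rotation-invariant distance table function -/
def Dn (n : ℕ) (Luu Luv Lvv : List ℕ) : (ZMod n ⊕ ZMod n) → (ZMod n ⊕ ZMod n) → ℕ
  | .inl i, .inl j => Luu.getD (j - i).val 0
  | .inl i, .inr j => Luv.getD (j - i).val 0
  | .inr i, .inl j => Luv.getD (i - j).val 0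
  | .inr i, .inr j => Lvv.getD (j - i).val 0

def D5 := Dn 5 [0, 1, 2, 2, 1] [1, 2, 2, 2, 2] [0, 2, 1, 1, 2]
def D10 := Dn 10 [0,1,2,3,4,5,4,3,2,1] [1,2,2,3,3,4,3,3,2,2] [0,3,1,4,2,5,2,4,1,3]


section Adj
variable {n : ℕ}

lemma one_ne_zero5' (hn : 5 ≤ n) : (1 : ZMod n) ≠ 0 := by
  haveI : NeZero n := ⟨by omega⟩
  intro h
  have : (1 : ZMod n).val = 1 := by
    rw [show (1 : ZMod n) = ((1:ℕ) : ZMod n) by push_cast; ring, ZMod.val_natCast]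
    exact Nat.mod_eq_of_lt (by omega)
  rw [h] at this; simp at this

lemma two_ne_zero5' (hn : 5 ≤ n) : (2 : ZMod n) ≠ 0 := by
  haveI : NeZero n := ⟨by omega⟩
  intro h
  have : (2 : ZMod n).val = 2 := by
    rw [show (2 : ZMod n) = ((2:ℕ) : ZMod n) by push_cast; ring, ZMod.val_natCast]
    exact Nat.mod_eq_of_lt (by omega)
  rw [h] at this; simp at this

lemma cast2 : ((2 : ℕ) : ZMod n) = (2 : ZMod n) := by push_cast; ring

lemma GP_adj_outer (hn : 5 ≤ n) (i : ZMod n) : (GP n 2).Adj (.inl i) (.inl (i+1)) := by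
  rw [GP, SimpleGraph.fromRel_adj]
  refine ⟨?_, Or.inl rfl⟩
  simp only [ne_eq, Sum.inl.injEq]
  intro h
  exact one_ne_zero5' hn (by linear_combination -h)

lemma GP_adj_spoke (hn : 5 ≤ n) (i : ZMod n) : (GP n 2).Adj (.inl i) (.inr i) := by
  rw [GP, SimpleGraph.fromRel_adj]
  exact ⟨by simp, Or.inl rfl⟩

lemma GP_adj_inner (hn : 5 ≤ n) (i : ZMod n) : (GP n 2).Adj (.inr i) (.inr (i+2)) := by
  rw [GP, SimpleGraph.fromRel_adj]
  refine ⟨?_, Or.inl (by rw [cast2])⟩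
  simp only [ne_eq, Sum.inr.injEq]
  intro h
  exact two_ne_zero5' hn (by linear_combination -h)

lemma GP_adj_elim {x y : ZMod n ⊕ ZMod n} (h : (GP n 2).Adj x y) :
    (∃ i : ZMod n, x = .inl i ∧ (y = .inl (i+1) ∨ y = .inl (i-1))) ∨
    (∃ i : ZMod n, x = .inr i ∧ (y = .inr (i+2) ∨ y = .inr (i-2))) ∨
    (∃ i : ZMod n, x = .inl i ∧ y = .inr i) ∨
    (∃ i : ZMod n, x = .inr i ∧ y = .inl i) := by
  rw [GP, SimpleGraph.fromRel_adj] at h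
  obtain ⟨-, h⟩ := h
  rcases x with i | i <;> rcases y with j | j
  · refine Or.inl ⟨i, rfl, ?_⟩
    rcases h with h | h
    · exact Or.inl (by rw [h])
    · exact Or.inr (by rw [h]; ring_nf)
  · exact Or.inr (Or.inr (Or.inl ⟨i, rfl, by rcases h with h | h <;> simp_all⟩))
  · exact Or.inr (Or.inr (Or.inr ⟨i, rfl, by rcases h with h | h <;> simp_all⟩))
  · refine Or.inr (Or.inl ⟨i, rfl, ?_⟩)
    rw [cast2] at h
    rcases h with h | h
    · exact Or.inl (by rw [h])
    · exact Or.inr (by rw [h]; ring_nf)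

end Adj

section ZModHelp
variable {n : ℕ}
lemma val_one5 (hn : 5 ≤ n) : (1 : ZMod n).val = 1 := by
  haveI : NeZero n := ⟨by omega⟩
  rw [show (1 : ZMod n) = ((1:ℕ) : ZMod n) by push_cast; ring, ZMod.val_natCast]
  exact Nat.mod_eq_of_lt (by omega)
lemma val_two5 (hn : 5 ≤ n) : (2 : ZMod n).val = 2 := by
  haveI : NeZero n := ⟨by omega⟩
  rw [show (2 : ZMod n) = ((2:ℕ) : ZMod n) by push_cast; ring, ZMod.val_natCast]
  exact Nat.mod_eq_of_lt (by omega)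
lemma val_lt5 (hn : 5 ≤ n) (j : ZMod n) : j.val < n := by
  haveI : NeZero n := ⟨by omega⟩
  exact ZMod.val_lt j
lemma modh {x : ℕ} (h : x < 2 * n) : x % n = if x < n then x else x - n := by
  split_ifs with h'
  · exact Nat.mod_eq_of_lt h'
  · rw [Nat.mod_eq_sub_mod (by omega), Nat.mod_eq_of_lt (by omega)]
lemma val_add_one_if (hn : 5 ≤ n) (j : ZMod n) :
    (j+1).val = if j.val + 1 < n then j.val + 1 else j.val + 1 - n := by
  haveI : NeZero n := ⟨by omega⟩
  rw [ZMod.val_add, val_one5 hn]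
  exact modh (by have := val_lt5 hn j; omega)
lemma val_add_two_if (hn : 5 ≤ n) (j : ZMod n) :
    (j+2).val = if j.val + 2 < n then j.val + 2 else j.val + 2 - n := by
  haveI : NeZero n := ⟨by omega⟩
  rw [ZMod.val_add, val_two5 hn]
  exact modh (by have := val_lt5 hn j; omega)
lemma val_sub_one_if (hn : 5 ≤ n) (j : ZMod n) :
    (j-1).val = if j.val + (n-1) < n then j.val + (n-1) else j.val + (n-1) - n := by
  haveI : NeZero n := ⟨by omega⟩
  have h1 : (j - 1) = j + ((n-1 : ℕ) : ZMod n) := by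
    have : ((n-1 : ℕ) : ZMod n) = (n : ZMod n) - 1 := by
      push_cast [Nat.cast_sub (by omega : 1 ≤ n)]; ring
    rw [this, ZMod.natCast_self]; ring
  rw [h1, ZMod.val_add, ZMod.val_natCast, Nat.mod_eq_of_lt (show n - 1 < n by omega)]
  exact modh (by have := val_lt5 hn j; omega)
lemma val_sub_two_if (hn : 5 ≤ n) (j : ZMod n) :
    (j-2).val = if j.val + (n-2) < n then j.val + (n-2) else j.val + (n-2) - n := by
  haveI : NeZero n := ⟨by omega⟩
  have h1 : (j - 2) = j + ((n-2 : ℕ) : ZMod n) := by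
    have : ((n-2 : ℕ) : ZMod n) = (n : ZMod n) - 2 := by
      push_cast [Nat.cast_sub (by omega : 2 ≤ n)]; ring
    rw [this, ZMod.natCast_self]; ring
  rw [h1, ZMod.val_add, ZMod.val_natCast, Nat.mod_eq_of_lt (show n - 2 < n by omega)]
  exact modh (by have := val_lt5 hn j; omega)
end ZModHelp

/-- cyclic norm -/
abbrev nrm (n : ℕ) (j : ZMod n) : ℕ := min j.val (n - j.val)

/-- distance from `u₀` (valid for `11 ≤ n`) -/
def fu (n : ℕ) : ZMod n ⊕ ZMod n → ℕ
  | .inl j => min (nrm n j) ((nrm n j + 5)/2)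
  | .inr j => (nrm n j + 3)/2

/-- distance from `v₀` (valid for `11 ≤ n`) -/
def fv (n : ℕ) : ZMod n ⊕ ZMod n → ℕ
  | .inl j => (nrm n j + 3)/2
  | .inr j =>
      if nrm n j % 2 = 0 then nrm n j / 2
      else if n % 2 = 1 then min ((n - nrm n j)/2) ((nrm n j + 5)/2)
      else (nrm n j + 5)/2

section Verif
variable {n : ℕ}

lemma nrm_zero (hn : 5 ≤ n) : nrm n 0 = 0 := by
  haveI : NeZero n := ⟨by omega⟩
  simp [nrm]

lemma fu_zero (hn : 11 ≤ n) : fu n (.inl 0) = 0 := by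
  have h := nrm_zero (show 5 ≤ n by omega)
  simp [fu, h]

lemma fv_zero (hn : 11 ≤ n) : fv n (.inr 0) = 0 := by
  have h := nrm_zero (show 5 ≤ n by omega)
  simp [fv, h]

lemma nrm_eq_zero (hn : 5 ≤ n) {j : ZMod n} (h : nrm n j = 0) : j = 0 := by
  haveI : NeZero n := ⟨by omega⟩
  have hm := val_lt5 hn j
  have : j.val = 0 := by simp only [nrm] at h; omega
  exact ZMod.val_injective n (by simpa using this)

lemma fu_eq_zero (hn : 11 ≤ n) : ∀ x, fu n x = 0 → x = .inl 0 := by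
  rintro (j | j) h
  · simp only [fu] at h
    have := nrm_eq_zero (n := n) (by omega) (j := j) (by omega)
    rw [this]
  · simp only [fu] at h; omega

lemma fv_eq_zero (hn : 11 ≤ n) : ∀ x, fv n x = 0 → x = .inr 0 := by
  rintro (j | j) h
  · simp only [fv] at h; omega
  · simp only [fv] at h
    have hm := val_lt5 (by omega : 5 ≤ n) j
    have hnr : nrm n j = 0 := by
      have h2n : 2 * nrm n j ≤ n := by simp only [nrm]; omega
      split_ifs at h with h1 h2
      · omega
      · omega
      · omega
    rw [nrm_eq_zero (by omega) hnr]
end Verif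

section LipDesc
variable {n : ℕ}

lemma fu_lip (hn : 11 ≤ n) : ∀ x y, (GP n 2).Adj x y → fu n y ≤ fu n x + 1 := by
  intro x y h
  have h5 : 5 ≤ n := by omega
  rcases GP_adj_elim h with ⟨i, rfl, (rfl | rfl)⟩ | ⟨i, rfl, (rfl | rfl)⟩ | ⟨i, rfl, rfl⟩ | ⟨i, rfl, rfl⟩ <;>
    have hm := val_lt5 h5 i <;> simp only [fu, nrm]
  · rw [val_add_one_if h5]; split_ifs <;> omega
  · rw [val_sub_one_if h5]; split_ifs <;> omega
  · rw [val_add_two_if h5]; split_ifs <;> omega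
  · rw [val_sub_two_if h5]; split_ifs <;> omega
  · omega
  · omega

lemma fv_lip (hn : 11 ≤ n) : ∀ x y, (GP n 2).Adj x y → fv n y ≤ fv n x + 1 := by
  intro x y h
  have h5 : 5 ≤ n := by omega
  rcases GP_adj_elim h with ⟨i, rfl, (rfl | rfl)⟩ | ⟨i, rfl, (rfl | rfl)⟩ | ⟨i, rfl, rfl⟩ | ⟨i, rfl, rfl⟩ <;>
    have hm := val_lt5 h5 i <;> simp only [fv, nrm]
  · rw [val_add_one_if h5]; split_ifs <;> omega
  · rw [val_sub_one_if h5]; split_ifs <;> omega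
  · rw [val_add_two_if h5]; split_ifs <;> omega
  · rw [val_sub_two_if h5]; split_ifs <;> omega
  · split_ifs <;> omega
  · split_ifs <;> omega

lemma fu_desc (hn : 11 ≤ n) :
    ∀ x, fu n x ≠ 0 → ∃ y, (GP n 2).Adj y x ∧ fu n y < fu n x := by
  have h5 : 5 ≤ n := by omega
  rintro (j | j) hx <;> have hm := val_lt5 h5 j
  · by_cases hc : 4 ≤ nrm n j
    · refine ⟨.inr j, (GP_adj_spoke h5 j).symm, ?_⟩
      simp only [nrm] at hc
      simp only [fu, nrm]
      omega
    · simp only [nrm] at hc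
      rcases le_or_gt (2 * j.val) n with hs | hs
      · refine ⟨.inl (j - 1), ?_, ?_⟩
        · have h := GP_adj_outer h5 (j - 1)
          rwa [sub_add_cancel] at h
        · simp only [fu, nrm] at hx ⊢
          rw [val_sub_one_if h5]
          split_ifs <;> omega
      · refine ⟨.inl (j + 1), (GP_adj_outer h5 j).symm, ?_⟩
        simp only [fu, nrm] at hx ⊢
        rw [val_add_one_if h5]
        split_ifs <;> omega
  · by_cases hc : nrm n j ≤ 1
    · refine ⟨.inl j, GP_adj_spoke h5 j, ?_⟩
      simp only [nrm] at hc
      simp only [fu, nrm]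
      omega
    · simp only [nrm] at hc
      rcases le_or_gt (2 * j.val) n with hs | hs
      · refine ⟨.inr (j - 2), ?_, ?_⟩
        · have h := GP_adj_inner h5 (j - 2)
          rwa [sub_add_cancel] at h
        · simp only [fu, nrm]
          rw [val_sub_two_if h5]
          split_ifs <;> omega
      · refine ⟨.inr (j + 2), (GP_adj_inner h5 j).symm, ?_⟩
        simp only [fu, nrm]
        rw [val_add_two_if h5]
        split_ifs <;> omega

lemma fv_desc (hn : 11 ≤ n) :
    ∀ x, fv n x ≠ 0 → ∃ y, (GP n 2).Adj y x ∧ fv n y < fv n x := by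
  have h5 : 5 ≤ n := by omega
  rintro (j | j) hx <;> have hm := val_lt5 h5 j
  · -- outer vertex
    by_cases hpar : nrm n j % 2 = 0
    · refine ⟨.inr j, (GP_adj_spoke h5 j).symm, ?_⟩
      simp only [nrm] at hpar
      simp only [fv, nrm]
      split_ifs <;> omega
    · simp only [nrm] at hpar
      rcases le_or_gt (2 * j.val) n with hs | hs
      · refine ⟨.inl (j - 1), ?_, ?_⟩
        · have h := GP_adj_outer h5 (j - 1)
          rwa [sub_add_cancel] at h
        · simp only [fv, nrm]
          rw [val_sub_one_if h5]
          split_ifs <;> omega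
      · refine ⟨.inl (j + 1), (GP_adj_outer h5 j).symm, ?_⟩
        simp only [fv, nrm]
        rw [val_add_one_if h5]
        split_ifs <;> omega
  · -- inner vertex
    by_cases hpar : nrm n j % 2 = 0
    · -- even norm, fv = a/2, and a ≥ 2 from hx
      simp only [fv, nrm] at hx
      simp only [nrm] at hpar
      rw [if_pos hpar] at hx
      rcases le_or_gt (2 * j.val) n with hs | hs
      · refine ⟨.inr (j - 2), ?_, ?_⟩
        · have h := GP_adj_inner h5 (j - 2)
          rwa [sub_add_cancel] at h
        · simp only [fv, nrm]
          rw [val_sub_two_if h5]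
          split_ifs <;> omega
      · refine ⟨.inr (j + 2), (GP_adj_inner h5 j).symm, ?_⟩
        simp only [fv, nrm]
        rw [val_add_two_if h5]
        split_ifs <;> omega
    · simp only [nrm] at hpar
      by_cases hno : n % 2 = 1
      · by_cases hw : (nrm n j + 5)/2 ≤ (n - nrm n j)/2
        · refine ⟨.inl j, GP_adj_spoke h5 j, ?_⟩
          simp only [nrm] at hw
          simp only [fv, nrm]
          split_ifs <;> omega
        · simp only [nrm] at hw
          rcases le_or_gt (2 * j.val) n with hs | hs
          · refine ⟨.inr (j + 2), (GP_adj_inner h5 j).symm, ?_⟩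
            simp only [fv, nrm]
            rw [val_add_two_if h5]
            split_ifs <;> omega
          · refine ⟨.inr (j - 2), ?_, ?_⟩
            · have h := GP_adj_inner h5 (j - 2)
              rwa [sub_add_cancel] at h
            · simp only [fv, nrm]
              rw [val_sub_two_if h5]
              split_ifs <;> omega
      · refine ⟨.inl j, GP_adj_spoke h5 j, ?_⟩
        simp only [fv, nrm]
        split_ifs <;> omega

end LipDesc

section DistGen
variable {n : ℕ}
lemma dist_fu (hn : 11 ≤ n) : ∀ x, (GP n 2).dist (.inl 0) x = fu n x :=
  dist_eq_of_descent _ _ _ (fu_zero hn) (fu_eq_zero hn) (fu_lip hn) (fu_desc hn)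
lemma dist_fv (hn : 11 ≤ n) : ∀ x, (GP n 2).dist (.inr 0) x = fv n x :=
  dist_eq_of_descent _ _ _ (fv_zero hn) (fv_eq_zero hn) (fv_lip hn) (fv_desc hn)
end DistGen
section Count
variable {n : ℕ}

lemma eq_iff_val [NeZero n] (i j : ZMod n) : i = j ↔ i.val = j.val :=
  ⟨congrArg _, fun h => ZMod.val_injective n h⟩

lemma val_one5' (hn : 5 ≤ n) : (1 : ZMod n).val = 1 := by
  haveI : NeZero n := ⟨by omega⟩
  rw [show (1 : ZMod n) = ((1:ℕ) : ZMod n) by push_cast; ring, ZMod.val_natCast]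
  exact Nat.mod_eq_of_lt (by omega)

lemma val_two5' (hn : 5 ≤ n) : (2 : ZMod n).val = 2 := by
  haveI : NeZero n := ⟨by omega⟩
  rw [show (2 : ZMod n) = ((2:ℕ) : ZMod n) by push_cast; ring, ZMod.val_natCast]
  exact Nat.mod_eq_of_lt (by omega)

lemma val_three5 (hn : 5 ≤ n) : (3 : ZMod n).val = 3 := by
  haveI : NeZero n := ⟨by omega⟩
  rw [show (3 : ZMod n) = ((3:ℕ) : ZMod n) by push_cast; ring, ZMod.val_natCast]
  exact Nat.mod_eq_of_lt (by omega)

lemma val_neg_one5 (hn : 5 ≤ n) : (-1 : ZMod n).val = n - 1 := by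
  have h := val_sub_one_if hn (0 : ZMod n)
  haveI : NeZero n := ⟨by omega⟩
  rw [zero_sub, ZMod.val_zero] at h
  rw [h]
  split_ifs <;> omega

lemma val_neg_two5 (hn : 5 ≤ n) : (-2 : ZMod n).val = n - 2 := by
  have h := val_sub_two_if hn (0 : ZMod n)
  haveI : NeZero n := ⟨by omega⟩
  rw [zero_sub, ZMod.val_zero] at h
  rw [h]
  split_ifs <;> omega

lemma val_neg_three5 (hn : 5 ≤ n) : (-3 : ZMod n).val = n - 3 := by
  have h := val_sub_one_if hn (-2 : ZMod n)
  haveI : NeZero n := ⟨by omega⟩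
  rw [show (-2 : ZMod n) - 1 = -3 by ring, val_neg_two5 hn] at h
  rw [h]
  split_ifs <;> omega

lemma nrm_le2 (hn : 5 ≤ n) (j : ZMod n) : 2 * nrm n j ≤ n := by
  have := val_lt5 hn j
  simp only [nrm]
  omega

open Finset in
lemma card_WU_lt_WV (hn : 11 ≤ n) :
    (wSet (GP n 2) (.inl 0) (.inr 0)).ncard < (wSet (GP n 2) (.inr 0) (.inl 0)).ncard := by
  haveI : NeZero n := ⟨by omega⟩
  have h5 : 5 ≤ n := by omega
  have hWu : wSet (GP n 2) (.inl 0) (.inr 0)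
      = ↑(univ.filter (fun w => fu n w < fv n w)) := by
    ext w
    simp [wSet, dist_fu hn, dist_fv hn]
  have hWv : wSet (GP n 2) (.inr 0) (.inl 0)
      = ↑(univ.filter (fun w => fv n w < fu n w)) := by
    ext w
    simp [wSet, dist_fu hn, dist_fv hn]
  rw [hWu, hWv, Set.ncard_coe_finset, Set.ncard_coe_finset]
  -- decompose over the sum type
  have hdecomp : ∀ (P : ZMod n ⊕ ZMod n → Prop) [DecidablePred P],
      (univ.filter P).card
        = (univ.filter (fun j => P (.inl j))).card + (univ.filter (fun j => P (.inr j))).card := by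
    intro P _
    rw [show (univ.filter P)
        = (univ.filter (fun j => P (.inl j))).disjSum (univ.filter (fun j => P (.inr j))) by
      ext x
      rcases x with j | j <;> simp [Finset.mem_disjSum]]
    exact Finset.card_disjSum _ _
  rw [hdecomp, hdecomp]
  -- outer counts
  have hm : ∀ j : ZMod n, j.val < n := fun j => val_lt5 h5 j
  have cOU : (univ.filter (fun j : ZMod n => fu n (.inl j) < fv n (.inl j))).card = 3 := by
    have hset : (univ.filter (fun j : ZMod n => fu n (.inl j) < fv n (.inl j)))
        = ({0, 1, -1} : Finset (ZMod n)) := by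
      ext j
      simp only [mem_filter]
      simp only [mem_filter, mem_univ, true_and, mem_insert, mem_singleton,
        fu, fv, nrm, eq_iff_val j 0, eq_iff_val j 1, eq_iff_val j (-1),
        ZMod.val_zero, val_one5' h5, val_neg_one5 h5]
      have := hm j
      omega
    rw [hset]
    rw [card_insert_of_notMem, card_insert_of_notMem, card_singleton]
    · simp only [mem_singleton, eq_iff_val, val_one5' h5, val_neg_one5 h5]
      omega
    · simp only [mem_insert, mem_singleton, eq_iff_val, ZMod.val_zero, val_one5' h5,
        val_neg_one5 h5]
      push_neg
      omega
  have cOV : (univ.filter (fun j : ZMod n => fv n (.inl j) < fu n (.inl j))).card = n - 7 := by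
    have hsmall : (univ.filter (fun j : ZMod n => ¬ (fv n (.inl j) < fu n (.inl j)))).card = 7 := by
      have hset : (univ.filter (fun j : ZMod n => ¬ (fv n (.inl j) < fu n (.inl j))))
          = ({0, 1, 2, 3, -1, -2, -3} : Finset (ZMod n)) := by
        ext j
        simp only [mem_filter]
        simp only [mem_filter, mem_univ, true_and, mem_insert, mem_singleton,
          fu, fv, nrm, eq_iff_val j 0, eq_iff_val j 1, eq_iff_val j 2, eq_iff_val j 3,
          eq_iff_val j (-1), eq_iff_val j (-2), eq_iff_val j (-3),
          ZMod.val_zero, val_one5' h5, val_two5' h5, val_three5 h5,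
          val_neg_one5 h5, val_neg_two5 h5, val_neg_three5 h5]
        have := hm j
        omega
      rw [hset]
      rw [card_insert_of_notMem (by
        simp only [mem_insert, mem_singleton, eq_iff_val, ZMod.val_zero, val_one5' h5,
          val_two5' h5, val_three5 h5, val_neg_one5 h5, val_neg_two5 h5, val_neg_three5 h5]
        push_neg
        omega)]
      rw [card_insert_of_notMem (by
        simp only [mem_insert, mem_singleton, eq_iff_val, ZMod.val_zero, val_one5' h5,
          val_two5' h5, val_three5 h5, val_neg_one5 h5, val_neg_two5 h5, val_neg_three5 h5]
        push_neg
        omega)]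
      rw [card_insert_of_notMem (by
        simp only [mem_insert, mem_singleton, eq_iff_val, ZMod.val_zero, val_one5' h5,
          val_two5' h5, val_three5 h5, val_neg_one5 h5, val_neg_two5 h5, val_neg_three5 h5]
        push_neg
        omega)]
      rw [card_insert_of_notMem (by
        simp only [mem_insert, mem_singleton, eq_iff_val, ZMod.val_zero, val_one5' h5,
          val_two5' h5, val_three5 h5, val_neg_one5 h5, val_neg_two5 h5, val_neg_three5 h5]
        push_neg
        omega)]
      rw [card_insert_of_notMem (by
        simp only [mem_insert, mem_singleton, eq_iff_val, ZMod.val_zero, val_one5' h5,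
          val_two5' h5, val_three5 h5, val_neg_one5 h5, val_neg_two5 h5, val_neg_three5 h5]
        push_neg
        omega)]
      rw [card_insert_of_notMem (by
        simp only [mem_insert, mem_singleton, eq_iff_val, ZMod.val_zero, val_one5' h5,
          val_two5' h5, val_three5 h5, val_neg_one5 h5, val_neg_two5 h5, val_neg_three5 h5]
        push_neg
        omega)]
      rw [card_singleton]
    have := Finset.card_filter_add_card_filter_not
      (s := (univ : Finset (ZMod n))) (p := fun j => fv n (.inl j) < fu n (.inl j))
    rw [Finset.card_univ, ZMod.card] at this
    omega
  -- inner part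
  set IU := univ.filter (fun j : ZMod n => fu n (.inr j) < fv n (.inr j)) with hIU
  set IV := univ.filter (fun j : ZMod n => fv n (.inr j) < fu n (.inr j)) with hIV
  set S := univ.filter (fun j : ZMod n => nrm n j % 2 = 1 ∧ 2 * nrm n j + 1 ≠ n) with hS
  set E := univ.filter (fun j : ZMod n => nrm n j % 2 = 0) with hE
  set T := univ.filter (fun j : ZMod n => nrm n j % 2 = 1 ∧ 2 * nrm n j + 1 = n) with hT
  have hIUS : IU ⊆ S := by
    intro j hj
    have hle : 2 * min j.val (n - j.val) ≤ n := by have := hm j; omega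
    simp only [hIU, hS, mem_filter, mem_univ, true_and, fu, fv, nrm] at hj ⊢
    split_ifs at hj <;> omega
  have hSE : S.card ≤ E.card := by
    apply Finset.card_le_card_of_injOn
      (fun j => if n % 2 = 0 then j + 1 else if 2 * j.val < n then j + 1 else j - 1)
    · intro j hj
      have hmj := hm j
      simp only [hS, hE, Finset.coe_filter, Set.mem_setOf_eq, mem_filter, mem_univ, true_and, nrm] at hj ⊢
      by_cases hpar : n % 2 = 0
      · rw [if_pos hpar, val_add_one_if h5]
        split_ifs <;> omega
      · rw [if_neg hpar]
        by_cases hs : 2 * j.val < n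
        · rw [if_pos hs, val_add_one_if h5]
          split_ifs <;> omega
        · rw [if_neg hs, val_sub_one_if h5]
          split_ifs <;> omega
    · intro j1 h1 j2 h2 heq
      simp only [hS, Finset.coe_filter, Set.mem_setOf_eq, mem_univ, true_and, nrm] at h1 h2
      have hm1 := hm j1; have hm2 := hm j2
      simp only at heq
      by_cases hpar : n % 2 = 0
      · rw [if_pos hpar, if_pos hpar] at heq
        exact add_right_cancel heq
      · rw [if_neg hpar, if_neg hpar] at heq
        by_cases hs1 : 2 * j1.val < n <;> by_cases hs2 : 2 * j2.val < n
        · rw [if_pos hs1, if_pos hs2] at heq; exact add_right_cancel heq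
        · rw [if_pos hs1, if_neg hs2] at heq
          exfalso
          have hv := congrArg ZMod.val heq
          rw [val_add_one_if h5, val_sub_one_if h5] at hv
          split_ifs at hv <;> omega
        · rw [if_neg hs1, if_pos hs2] at heq
          exfalso
          have hv := congrArg ZMod.val heq
          rw [val_sub_one_if h5, val_add_one_if h5] at hv
          split_ifs at hv <;> omega
        · rw [if_neg hs1, if_neg hs2] at heq
          rwa [sub_left_inj] at heq
  have hET : Disjoint E T := by
    rw [Finset.disjoint_left]
    intro j hjE hjT
    simp only [hE, hT, mem_filter] at hjE hjT
    omega
  have hETIV : E ∪ T ⊆ IV := by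
    intro j hj
    have hle : 2 * min j.val (n - j.val) ≤ n := by have := hm j; omega
    simp only [hE, hT, hIV, Finset.mem_union, mem_filter, mem_univ, true_and, fu, fv, nrm] at hj ⊢
    rcases hj with hj | hj
    · rw [if_pos hj]; omega
    · rw [if_neg (by omega), if_pos (by omega)]
      omega
  have hIV2 : E.card + T.card ≤ IV.card := by
    rw [← Finset.card_union_of_disjoint hET]
    exact Finset.card_le_card hETIV
  have hT1 : n = 11 → 1 ≤ T.card := by
    intro h11
    subst h11
    refine Finset.card_pos.mpr ⟨5, ?_⟩
    rw [hT, Finset.mem_filter]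
    refine ⟨Finset.mem_univ _, ?_⟩
    have h5v : (5 : ZMod 11).val = 5 := by
      rw [show (5 : ZMod 11) = ((5:ℕ) : ZMod 11) by push_cast; ring, ZMod.val_natCast]
    simp only [nrm, h5v]
    omega
  have hIUcard := Finset.card_le_card hIUS
  rw [cOU, cOV]
  omega

end Count

lemma unbal_ge {n : ℕ} (hn : 11 ≤ n) : ¬ IsDistBalanced (GP n 2) 1 := by
  intro h
  have hd : (GP n 2).dist (.inl 0) (.inr 0) = 1 := by
    rw [dist_fu hn]
    have h0 : nrm n (0 : ZMod n) = 0 := nrm_zero (by omega)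
    simp [fu, h0]
  have hb := h _ _ hd
  unfold IsBalancedPair at hb
  have := card_WU_lt_WV hn
  omega
section Small
open Finset

lemma balance_of_table (n : ℕ) [NeZero n] (D : (ZMod n ⊕ ZMod n) → (ZMod n ⊕ ZMod n) → ℕ)
    (h0 : ∀ s, D s s = 0) (hz : ∀ s x, D s x = 0 → x = s)
    (hlip : ∀ s x y, (GP n 2).Adj x y → D s y ≤ D s x + 1)
    (hdesc : ∀ s x, D s x ≠ 0 → ∃ y, (GP n 2).Adj y x ∧ D s y < D s x)
    (hbal : ∀ u v, (GP n 2).Adj u v →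
      (Finset.univ.filter (fun w => D u w < D v w)).card
        = (Finset.univ.filter (fun w => D v w < D u w)).card) :
    IsDistBalanced (GP n 2) 1 := by
  have hD : ∀ s x, (GP n 2).dist s x = D s x := fun s =>
    dist_eq_of_descent _ _ _ (h0 s) (hz s) (hlip s) (hdesc s)
  intro u v hd
  have hadj : (GP n 2).Adj u v := by rwa [SimpleGraph.dist_eq_one_iff_adj] at hd
  unfold IsBalancedPair
  have h1 : wSet (GP n 2) u v = ↑(univ.filter fun w => D u w < D v w) := by
    ext w; simp [wSet, hD]
  have h2 : wSet (GP n 2) v u = ↑(univ.filter fun w => D v w < D u w) := by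
    ext w; simp [wSet, hD]
  rw [h1, h2, Set.ncard_coe_finset, Set.ncard_coe_finset]
  exact hbal u v hadj

lemma refute_of_table (n : ℕ) [NeZero n] (D : (ZMod n ⊕ ZMod n) → (ZMod n ⊕ ZMod n) → ℕ)
    (h0 : ∀ s, D s s = 0) (hz : ∀ s x, D s x = 0 → x = s)
    (hlip : ∀ s x y, (GP n 2).Adj x y → D s y ≤ D s x + 1)
    (hdesc : ∀ s x, D s x ≠ 0 → ∃ y, (GP n 2).Adj y x ∧ D s y < D s x)
    (hone : D (.inl 0) (.inr 0) = 1)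
    (hbad : (Finset.univ.filter (fun w => D (.inl 0) w < D (.inr 0) w)).card
        ≠ (Finset.univ.filter (fun w => D (.inr 0) w < D (.inl 0) w)).card) :
    ¬ IsDistBalanced (GP n 2) 1 := by
  have hD : ∀ s x, (GP n 2).dist s x = D s x := fun s =>
    dist_eq_of_descent _ _ _ (h0 s) (hz s) (hlip s) (hdesc s)
  intro h
  have hd : (GP n 2).dist (.inl 0) (.inr 0) = 1 := by rw [hD]; exact hone
  have hb := h _ _ hd
  unfold IsBalancedPair at hb
  have h1 : wSet (GP n 2) (.inl 0) (.inr 0)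
      = ↑(univ.filter fun w => D (.inl 0) w < D (.inr 0) w) := by
    ext w; simp [wSet, hD]
  have h2 : wSet (GP n 2) (.inr 0) (.inl 0)
      = ↑(univ.filter fun w => D (.inr 0) w < D (.inl 0) w) := by
    ext w; simp [wSet, hD]
  rw [h1, h2, Set.ncard_coe_finset, Set.ncard_coe_finset] at hb
  exact hbad hb

def D6 := Dn 6 [0,1,2,3,2,1] [1,2,2,3,2,2] [0,3,1,4,1,3]
def D7 := Dn 7 [0,1,2,3,3,2,1] [1,2,2,3,3,2,2] [0,3,1,2,2,1,3]
def D8 := Dn 8 [0,1,2,3,4,3,2,1] [1,2,2,3,3,3,2,2] [0,3,1,4,2,4,1,3]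
def D9 := Dn 9 [0,1,2,3,4,4,3,2,1] [1,2,2,3,3,3,3,2,2] [0,3,1,3,2,2,3,1,3]

lemma bal5' : IsDistBalanced (GP 5 2) 1 :=
  balance_of_table 5 D5 (by decide) (by decide) (by decide) (by decide) (by decide)
lemma bal7' : IsDistBalanced (GP 7 2) 1 :=
  balance_of_table 7 D7 (by decide) (by decide) (by decide) (by decide) (by decide)
lemma bal10' : IsDistBalanced (GP 10 2) 1 :=
  balance_of_table 10 D10 (by decide) (by decide) (by decide) (by decide) (by decide)
lemma unbal6' : ¬ IsDistBalanced (GP 6 2) 1 :=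
  refute_of_table 6 D6 (by decide) (by decide) (by decide) (by decide) (by decide) (by decide)
lemma unbal8' : ¬ IsDistBalanced (GP 8 2) 1 :=
  refute_of_table 8 D8 (by decide) (by decide) (by decide) (by decide) (by decide) (by decide)
lemma unbal9' : ¬ IsDistBalanced (GP 9 2) 1 :=
  refute_of_table 9 D9 (by decide) (by decide) (by decide) (by decide) (by decide) (by decide)

end Small

theorem statement_17 (n : ℕ) (hn : 5 ≤ n) :
    IsDistBalanced (GP n 2) 1 ↔ n = 5 ∨ n = 7 ∨ n = 10 := by
  constructor
  · intro h
    by_contra hc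
    push_neg at hc
    obtain ⟨h5, h7, h10⟩ := hc
    have hcase : n = 6 ∨ n = 8 ∨ n = 9 ∨ 11 ≤ n := by omega
    rcases hcase with rfl | rfl | rfl | h11
    · exact unbal6' h
    · exact unbal8' h
    · exact unbal9' h
    · exact unbal_ge h11 h
  · rintro (rfl | rfl | rfl)
    · exact bal5'
    · exact bal7'
    · exact bal10'
end
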